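/- arXiv:1606.05792 — 4 statements merged into one kernel-verified Lean document; each statement's English description precedes it below -/
import Mathlib

section
/- For every positive integer m, the tail sums satisfy lim_{ε → 0+} ∑_{i ≥ m} sin²(iε/2)/(i² ε) = π/4. -/
open Real Filter

lemma aux_cos_sum {x : ℝ} (hx : x ∈ Set.Icc (0:ℝ) 1) :
    HasSum (fun n : ℕ => (((n : ℝ) ^ 2)⁻¹ * Real.cos (2 * π * n * x)))
      (π ^ 2 * (x ^ 2 - x + 1/6)) := by
  have h := hasSum_one_div_nat_pow_mul_cos one_ne_zero hx
  norm_num [Nat.factorial] at h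
  have hb : (Polynomial.aeval x) (Polynomial.bernoulli 2) = x^2 - x + 1/6 := by
    have hb2 : _root_.bernoulli 2 = 1/6 := by
      rw [bernoulli_eq_bernoulli'_of_ne_one (by decide), bernoulli'_two]
    simp [Polynomial.bernoulli, Finset.sum_range_succ, bernoulli_one, bernoulli_zero, hb2]
    ring
  rw [hb, show (2*π)^2/2/2 = π^2 by ring] at h
  exact h

lemma hasSum_full {ε : ℝ} (h0 : 0 < ε) (h2 : ε ≤ 2 * π) :
    HasSum (fun n : ℕ => Real.sin (n * ε / 2) ^ 2 / ((n : ℝ) ^ 2 * ε)) (π / 4 - ε / 8) := by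
  have hπ := Real.pi_pos
  set x := ε / (2 * π) with hxdef
  have hx : x ∈ Set.Icc (0:ℝ) 1 :=
    ⟨by positivity, by rw [div_le_one (by positivity)]; exact h2⟩
  have h := (hasSum_zeta_two.sub (aux_cos_sum hx)).div_const (2 * ε)
  have hεx : 2 * π * x = ε := by rw [hxdef]; field_simp
  have hfun : ∀ n : ℕ, Real.sin (n * ε / 2) ^ 2 / ((n : ℝ) ^ 2 * ε)
      = (1 / (n:ℝ) ^ 2 - ((n:ℝ) ^ 2)⁻¹ * Real.cos (2 * π * n * x)) / (2 * ε) := by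
    intro n
    have harg : 2 * π * (n:ℝ) * x = n * ε := by rw [mul_comm (2*π) (n:ℝ), mul_assoc, hεx]
    rw [harg, Real.sin_sq_eq_half_sub, show 2 * ((n:ℝ) * ε / 2) = n * ε by ring]
    rcases Nat.eq_zero_or_pos n with hn | hn
    · simp [hn]
    · have hn' : ((n:ℝ)) ≠ 0 := Nat.cast_ne_zero.mpr hn.ne'
      field_simp
  have hval : (π ^ 2 / 6 - π ^ 2 * (x ^ 2 - x + 1/6)) / (2 * ε) = π / 4 - ε / 8 := by
    rw [hxdef]
    field_simp
    ring
  rw [hval] at h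
  exact HasSum.congr_fun h hfun

theorem stmt_7 (m : ℕ) (hm : 0 < m) :
    Tendsto (fun ε : ℝ =>
        ∑' i : ℕ, if m ≤ i then Real.sin (i * ε / 2) ^ 2 / ((i : ℝ) ^ 2 * ε) else 0)
      (nhdsWithin 0 (Set.Ioi 0)) (nhds (π / 4)) := by
  have hπ := Real.pi_pos
  set f : ℕ → ℝ → ℝ := fun i ε => Real.sin (i * ε / 2) ^ 2 / ((i : ℝ) ^ 2 * ε) with hf
  -- eventual identity
  have key : ∀ ε : ℝ, 0 < ε → ε ≤ 2 * π →
      (∑' i : ℕ, if m ≤ i then f i ε else 0)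
        = π / 4 - ε / 8 - ∑ i ∈ Finset.range m, f i ε := by
    intro ε h0 h2
    have hfull := hasSum_full h0 h2
    have hhead : HasSum (fun i : ℕ => if i < m then f i ε else 0)
        (∑ i ∈ Finset.range m, f i ε) := by
      have h1 := hasSum_sum_of_ne_finset_zero (L := SummationFilter.unconditional ℕ) (s := Finset.range m)
        (f := fun i : ℕ => if i < m then f i ε else 0)
        (by intro i hi; simp [Finset.mem_range] at hi; simp [Nat.not_lt.mpr hi])
      have h2 : (∑ i ∈ Finset.range m, if i < m then f i ε else 0)
          = ∑ i ∈ Finset.range m, f i ε :=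
        Finset.sum_congr rfl fun i hi => if_pos (Finset.mem_range.mp hi)
      rwa [h2] at h1
    have := hfull.sub hhead
    have heq : (fun i : ℕ => f i ε - if i < m then f i ε else 0)
        = fun i : ℕ => if m ≤ i then f i ε else 0 := by
      funext i
      by_cases h : m ≤ i
      · simp [h, Nat.not_lt.mpr h]
      · simp [h, Nat.lt_of_not_le h]
    rw [heq] at this
    exact this.tsum_eq
  have hev : ∀ᶠ ε in nhdsWithin (0:ℝ) (Set.Ioi 0),
      (∑' i : ℕ, if m ≤ i then f i ε else 0)
        = π / 4 - ε / 8 - ∑ i ∈ Finset.range m, f i ε := by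
    filter_upwards [Ioo_mem_nhdsGT_of_mem
      (Set.mem_Ico.mpr ⟨le_refl (0:ℝ), (by positivity : (0:ℝ) < 2 * π)⟩),
      self_mem_nhdsWithin] with ε hε hε'
    exact key ε hε' hε.2.le
  rw [tendsto_congr' hev]
  have hhead0 : Tendsto (fun ε : ℝ => ∑ i ∈ Finset.range m, f i ε)
      (nhdsWithin 0 (Set.Ioi 0)) (nhds 0) := by
    have hle : ∀ᶠ ε in nhdsWithin (0:ℝ) (Set.Ioi 0),
        ∑ i ∈ Finset.range m, f i ε ≤ m * (ε / 4) := by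
      filter_upwards [self_mem_nhdsWithin] with ε hε
      have hε : (0:ℝ) < ε := hε
      calc ∑ i ∈ Finset.range m, f i ε ≤ ∑ i ∈ Finset.range m, ε / 4 := by
            apply Finset.sum_le_sum
            intro i _
            rcases Nat.eq_zero_or_pos i with h | h
            · simp [hf, h]; positivity
            · have hi : (0:ℝ) < (i:ℝ) := by exact_mod_cast h
              rw [hf]
              rw [div_le_iff₀ (by positivity)]
              calc Real.sin ((i:ℝ) * ε / 2) ^ 2 ≤ ((i:ℝ) * ε / 2) ^ 2 :=
                    Real.sin_sq_le_sq
                _ = ε / 4 * ((i:ℝ)^2 * ε) := by ring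
        _ = m * (ε / 4) := by simp [Finset.sum_const, mul_comm]
    have hge : ∀ᶠ ε in nhdsWithin (0:ℝ) (Set.Ioi 0),
        (0:ℝ) ≤ ∑ i ∈ Finset.range m, f i ε := by
      filter_upwards [self_mem_nhdsWithin] with ε hε
      have hε : (0:ℝ) < ε := hε
      apply Finset.sum_nonneg
      intro i _
      rw [hf]
      positivity
    have hub : Tendsto (fun ε : ℝ => (m:ℝ) * (ε / 4)) (nhdsWithin 0 (Set.Ioi 0)) (nhds 0) := by
      have : Tendsto (fun ε : ℝ => (m:ℝ) * (ε / 4)) (nhds 0) (nhds ((m:ℝ) * ((0:ℝ) / 4))) :=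
        (continuous_const.mul (continuous_id.div_const 4)).tendsto 0
      simpa using this.mono_left nhdsWithin_le_nhds
    exact tendsto_of_tendsto_of_tendsto_of_le_of_le' tendsto_const_nhds hub hge hle
  have hlin : Tendsto (fun ε : ℝ => π / 4 - ε / 8) (nhdsWithin 0 (Set.Ioi 0))
      (nhds (π / 4)) := by
    have : Tendsto (fun ε : ℝ => π / 4 - ε / 8) (nhds 0) (nhds (π / 4 - (0:ℝ) / 8)) :=
      (continuous_const.sub (continuous_id.div_const 8)).tendsto 0
    simpa using this.mono_left nhdsWithin_le_nhds
  simpa using hlin.sub hhead0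
end

section
/- There exists a sequence (α_i)_{i ≥ 1} with α_i ∈ {0,1} such that the function f(ε) = ∑_{i=1}^∞ α_i sin²(iε/2)/(i² ε) has no limit as ε → 0+; more precisely, there exist sequences ε_n ↓ 0 and ε'_n ↓ 0 with f(ε_n) > 1/2 for all n and f(ε'_n) < 1/4 for all n. -/
open Real Filter Finset

/-! ### The Fourier identity -/

lemma hasSum_sin_sq_aux (ε : ℝ) (h2 : ε ≤ 2 * π) (h0 : 0 ≤ ε) :
    HasSum (fun n : ℕ => Real.sin (n * ε / 2) ^ 2 / (n : ℝ) ^ 2) (ε * (2 * π - ε) / 8) := by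
  have hπ := Real.pi_pos
  set x : ℝ := ε / (2 * π) with hx
  have hx0 : 0 ≤ x := by positivity
  have hx1 : x ≤ 1 := by
    rw [hx, div_le_one (by positivity)]; exact h2
  have hcos := hasSum_one_div_nat_pow_mul_cos (k := 1) one_ne_zero ⟨hx0, hx1⟩
  have hb : (Polynomial.map (algebraMap ℚ ℝ) (Polynomial.bernoulli 2)).eval x
      = x ^ 2 - x + 1 / 6 := by
    simp [Polynomial.bernoulli, Finset.sum_range_succ, Polynomial.eval_monomial,
      bernoulli_eq_bernoulli'_of_ne_one, bernoulli'_two]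
    ring
  rw [hb] at hcos
  have h := (hasSum_zeta_two.sub hcos).div_const 2
  have hxe : (x : ℝ) * (2 * π) = ε := by rw [hx]; field_simp
  have hval : (π ^ 2 / 6 - (-1 : ℝ) ^ (1 + 1) * (2 * π) ^ (2 * 1) / 2 /
      (Nat.factorial (2 * 1) : ℝ) * (x ^ 2 - x + 1 / 6)) / 2 = ε * (2 * π - ε) / 8 := by
    have hf : (Nat.factorial (2 * 1) : ℝ) = 2 := by norm_num [Nat.factorial]
    rw [hf]
    nlinarith [hxe, sq_nonneg π]
  rw [hval] at h
  convert h using 2 with n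
  · rfl
  rcases Nat.eq_zero_or_pos n with hn | hn
  · simp [hn]
  · have hcos2 : Real.sin ((n : ℝ) * ε / 2) ^ 2 = 1 / 2 - Real.cos (n * ε) / 2 := by
      rw [Real.sin_sq_eq_half_sub]
      ring_nf
    have h2x : 2 * π * n * x = n * ε := by
      rw [hx]; field_simp
    rw [h2x, hcos2]
    norm_num
    ring

/-! ### The summand and its basic estimates -/

noncomputable def tt (ε : ℝ) (i : ℕ) : ℝ :=
  Real.sin (((i : ℝ) + 1) * ε / 2) ^ 2 / (((i : ℝ) + 1) ^ 2 * ε)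

lemma tt_nonneg {ε : ℝ} (hε : 0 < ε) (i : ℕ) : 0 ≤ tt ε i := by
  unfold tt; positivity

lemma tt_le {ε : ℝ} (hε : 0 < ε) (i : ℕ) : tt ε i ≤ ε / 4 := by
  unfold tt
  have h1 : (0:ℝ) < ((i : ℝ) + 1) ^ 2 * ε := by positivity
  rw [div_le_iff₀ h1]
  have hs : Real.sin (((i : ℝ) + 1) * ε / 2) ^ 2 ≤ (((i : ℝ) + 1) * ε / 2) ^ 2 := by
    rw [← sq_abs (Real.sin _), ← sq_abs (((i : ℝ) + 1) * ε / 2)]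
    exact pow_le_pow_left₀ (abs_nonneg _) Real.abs_sin_le_abs 2
  calc Real.sin (((i : ℝ) + 1) * ε / 2) ^ 2 ≤ (((i : ℝ) + 1) * ε / 2) ^ 2 := hs
    _ = ε / 4 * (((i : ℝ) + 1) ^ 2 * ε) := by ring

lemma head_le {ε : ℝ} (hε : 0 < ε) (N : ℕ) :
    ∑ i ∈ range N, tt ε i ≤ N * ε / 4 := by
  calc ∑ i ∈ range N, tt ε i ≤ ∑ _i ∈ range N, ε / 4 :=
        Finset.sum_le_sum fun i _ => tt_le hε i
    _ = N * ε / 4 := by rw [Finset.sum_const, card_range]; simp; ring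

lemma hasSum_tt {ε : ℝ} (hε : 0 < ε) (h2 : ε ≤ 2 * π) :
    HasSum (tt ε) ((2 * π - ε) / 8) := by
  have hA := hasSum_sin_sq_aux ε h2 hε.le
  have h1 : HasSum (fun i : ℕ => Real.sin ((↑(i + 1) : ℝ) * ε / 2) ^ 2 / (↑(i + 1) : ℝ) ^ 2)
      (ε * (2 * π - ε) / 8) := by
    have := (hasSum_nat_add_iff'
      (f := fun n : ℕ => Real.sin ((n : ℝ) * ε / 2) ^ 2 / (n : ℝ) ^ 2) 1).mpr hA
    simpa using this
  have h2' := h1.div_const ε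
  have hval : ε * (2 * π - ε) / 8 / ε = (2 * π - ε) / 8 := by
    field_simp
  rw [hval] at h2'
  convert h2' using 2 with i
  · rfl
  unfold tt
  push_cast
  rw [div_div]

lemma exists_head {ε : ℝ} (hε : 0 < ε) (h2 : ε ≤ 2 * π) (M : ℕ) :
    ∃ N, M ≤ N ∧ (2 * π - ε) / 8 - 1 / 16 ≤ ∑ i ∈ range N, tt ε i := by
  have h := (hasSum_tt hε h2).tendsto_sum_nat
  have hev : ∀ᶠ N in atTop, (2 * π - ε) / 8 - 1 / 16 ≤ ∑ i ∈ range N, tt ε i :=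
    h.eventually_const_le (by linarith)
  obtain ⟨N, hN1, hN2⟩ := (hev.and (eventually_ge_atTop M)).exists
  exact ⟨N, hN2, hN1⟩

/-! ### The recursive construction -/

def StepP (N : ℕ) (p : ℝ) (r : ℕ × ℝ × ℕ × ℝ) : Prop :=
  N + 1 ≤ r.1 ∧
  (2 * π - p) / 8 - 1 / 16 ≤ ∑ i ∈ range (r.1 - 1), tt p i ∧
  (0 < r.2.1 ∧ r.2.1 ≤ p / 2 ∧ (r.1 : ℝ) * r.2.1 ≤ 1 / 4) ∧
  (r.1 ≤ r.2.2.1 ∧ (2 * π - r.2.1) / 8 - 1 / 16 ≤ ∑ i ∈ range r.2.2.1, tt r.2.1 i) ∧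
  (0 < r.2.2.2 ∧ r.2.2.2 ≤ r.2.1 / 2 ∧ (r.2.2.1 : ℝ) * r.2.2.2 ≤ 1 / 4)

lemma pi_big : (3:ℝ) < π := Real.pi_gt_three

lemma step_ex (N : ℕ) (p : ℝ) (hp : 0 < p) (hp1 : p ≤ 1) :
    ∃ r : ℕ × ℝ × ℕ × ℝ, StepP N p r := by
  have hp2 : p ≤ 2 * π := by nlinarith [pi_big]
  obtain ⟨m', hm'1, hm'2⟩ := exists_head hp hp2 (N + 1)
  set m : ℕ := m' + 1 with hm
  set e : ℝ := min (p / 2) (1 / (4 * m)) with he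
  have hm0 : (0:ℝ) < m := by positivity
  have he0 : 0 < e := lt_min (by positivity) (by positivity)
  have hep : e ≤ p / 2 := min_le_left _ _
  have he2 : e ≤ 2 * π := by nlinarith [pi_big, hp1]
  have hme : (m : ℝ) * e ≤ 1 / 4 := by
    have : e ≤ 1 / (4 * m) := min_le_right _ _
    calc (m : ℝ) * e ≤ (m : ℝ) * (1 / (4 * m)) := by nlinarith
      _ = 1 / 4 := by field_simp
  obtain ⟨n, hn1, hn2⟩ := exists_head he0 he2 m
  set e' : ℝ := min (e / 2) (1 / (4 * (n + 1))) with he'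
  have he'0 : 0 < e' := lt_min (by positivity) (by positivity)
  have hne' : (n : ℝ) * e' ≤ 1 / 4 := by
    have h1 : e' ≤ 1 / (4 * (n + 1)) := min_le_right _ _
    have h2 : (0:ℝ) < 4 * ((n:ℝ) + 1) := by positivity
    calc (n : ℝ) * e' ≤ (n : ℝ) * (1 / (4 * ((n:ℝ) + 1))) := by
          apply mul_le_mul_of_nonneg_left _ (Nat.cast_nonneg n)
          exact_mod_cast h1
      _ ≤ 1 / 4 := by
          rw [mul_one_div, div_le_div_iff₀ h2 (by norm_num)]
          nlinarith [Nat.cast_nonneg (α := ℝ) n]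
  refine ⟨(m, e, n, e'), ?_, ?_, ⟨he0, hep, hme⟩, ⟨hn1, hn2⟩, ⟨he'0, min_le_left _ _, hne'⟩⟩
  · omega
  · simpa [hm] using hm'2

def Good (q : ℕ × ℝ) : Prop := 0 < q.2 ∧ q.2 ≤ 1

noncomputable def nxt (q : {q : ℕ × ℝ // Good q}) : ℕ × ℝ × ℕ × ℝ :=
  (step_ex q.1.1 q.1.2 q.2.1 q.2.2).choose

lemma nxt_spec (q : {q : ℕ × ℝ // Good q}) : StepP q.1.1 q.1.2 (nxt q) :=
  (step_ex q.1.1 q.1.2 q.2.1 q.2.2).choose_spec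

lemma good_nxt (q : {q : ℕ × ℝ // Good q}) : Good ((nxt q).2.2.1, (nxt q).2.2.2) := by
  have h := nxt_spec q
  have hq := q.2
  refine ⟨h.2.2.2.2.1, ?_⟩
  have h1 : (nxt q).2.2.2 ≤ (nxt q).2.1 / 2 := h.2.2.2.2.2.1
  have h2 : (nxt q).2.1 ≤ q.1.2 / 2 := h.2.2.1.2.1
  have := hq.2
  simp only
  linarith

noncomputable def Q : ℕ → {q : ℕ × ℝ // Good q}
  | 0 => ⟨(0, 1), by constructor <;> norm_num⟩
  | j + 1 => ⟨((nxt (Q j)).2.2.1, (nxt (Q j)).2.2.2), good_nxt (Q j)⟩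

noncomputable def mm (j : ℕ) : ℕ := (nxt (Q j)).1
noncomputable def ee (j : ℕ) : ℝ := (nxt (Q j)).2.1
noncomputable def nn (j : ℕ) : ℕ := (nxt (Q j)).2.2.1
noncomputable def ee' (j : ℕ) : ℝ := (nxt (Q j)).2.2.2

lemma Q_succ (j : ℕ) : (Q (j + 1)).1 = (nn j, ee' j) := rfl

lemma spec (j : ℕ) : StepP (Q j).1.1 (Q j).1.2 (mm j, ee j, nn j, ee' j) := nxt_spec (Q j)

lemma spec_succ (j : ℕ) :
    StepP (nn j) (ee' j) (mm (j+1), ee (j+1), nn (j+1), ee' (j+1)) := by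
  have := spec (j + 1)
  rwa [Q_succ j] at this

/-! ### Basic consequences of the construction -/

lemma ee_pos (j : ℕ) : 0 < ee j := (spec j).2.2.1.1
lemma ee'_pos (j : ℕ) : 0 < ee' j := (spec j).2.2.2.2.1
lemma ee'_le (j : ℕ) : ee' j ≤ ee j / 2 := (spec j).2.2.2.2.2.1
lemma ee_le (j : ℕ) : ee j ≤ (Q j).1.2 / 2 := (spec j).2.2.1.2.1
lemma Qp_le_one (j : ℕ) : (Q j).1.2 ≤ 1 := (Q j).2.2
lemma ee_le_half (j : ℕ) : ee j ≤ 1 / 2 := by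
  have := ee_le j; have := Qp_le_one j; linarith
lemma ee'_le_half (j : ℕ) : ee' j ≤ 1 / 2 := by
  have := ee'_le j; have := ee_le_half j; linarith
lemma ee_le_2pi (j : ℕ) : ee j ≤ 2 * π := by
  have := ee_le_half j; nlinarith [pi_big]
lemma ee'_le_2pi (j : ℕ) : ee' j ≤ 2 * π := by
  have := ee'_le_half j; nlinarith [pi_big]
lemma ee_succ_le (j : ℕ) : ee (j + 1) ≤ ee' j / 2 := by
  have h := (spec (j+1)).2.2.1.2.1
  rwa [Q_succ j] at h

lemma strictAnti_ee : StrictAnti ee := by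
  apply strictAnti_nat_of_succ_lt
  intro j
  have h1 := ee_succ_le j
  have h2 := ee'_le j
  have h3 := ee_pos j
  linarith

lemma strictAnti_ee' : StrictAnti ee' := by
  apply strictAnti_nat_of_succ_lt
  intro j
  have h1 := ee'_le (j + 1)
  have h2 := ee_succ_le j
  have h3 := ee'_pos j
  linarith

lemma ee_le_pow (j : ℕ) : ee j ≤ (1/2) ^ j ∧ ee' j ≤ (1/2) ^ j := by
  induction j with
  | zero =>
    have h1 := ee_le_half 0
    have h2 := ee'_le_half 0
    constructor <;> simpa using by linarith
  | succ j ih =>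
    have h1 := ee_succ_le j
    have h2 := ee'_le (j + 1)
    have h3 : ((1:ℝ)/2) ^ (j+1) = (1/2)^j / 2 := by ring
    constructor
    · rw [h3]; linarith [ih.2]
    · rw [h3]
      have : ee (j+1) ≤ (1/2)^j / 2 := by rw [← h3]; rw [h3]; linarith [ih.2]
      have h4 := ee_pos (j+1)
      linarith

lemma tendsto_ee : Tendsto ee atTop (nhds 0) := by
  apply tendsto_of_tendsto_of_tendsto_of_le_of_le tendsto_const_nhds
    (tendsto_pow_atTop_nhds_zero_of_lt_one (by norm_num) (by norm_num : (1:ℝ)/2 < 1))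
    (fun j => (ee_pos j).le) (fun j => (ee_le_pow j).1)

lemma tendsto_ee' : Tendsto ee' atTop (nhds 0) := by
  apply tendsto_of_tendsto_of_tendsto_of_le_of_le tendsto_const_nhds
    (tendsto_pow_atTop_nhds_zero_of_lt_one (by norm_num) (by norm_num : (1:ℝ)/2 < 1))
    (fun j => (ee'_pos j).le) (fun j => (ee_le_pow j).2)

lemma mm_ge_one (j : ℕ) : 1 ≤ mm j := by
  have := (spec j).1; omega

lemma mm_le_nn (j : ℕ) : mm j ≤ nn j := (spec j).2.2.2.1.1

lemma nn_lt_mm_succ (j : ℕ) : nn j + 1 ≤ mm (j + 1) := (spec_succ j).1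

lemma mm_mono : Monotone mm := by
  apply monotone_nat_of_le_succ
  intro j
  have := mm_le_nn j
  have := nn_lt_mm_succ j
  omega

lemma nn_mono : Monotone nn := by
  apply monotone_nat_of_le_succ
  intro j
  have := nn_lt_mm_succ j
  have := mm_le_nn (j + 1)
  omega

/-! ### The 0/1 sequence -/

open Classical in
noncomputable def af (k : ℕ) : ℝ := if ∃ j, mm j ≤ k ∧ k ≤ nn j then 1 else 0

lemma af_zero_or_one (k : ℕ) : af k = 0 ∨ af k = 1 := by
  unfold af; split <;> simp

lemma af_nonneg (k : ℕ) : 0 ≤ af k := by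
  rcases af_zero_or_one k with h | h <;> simp [h]

lemma af_le_one (k : ℕ) : af k ≤ 1 := by
  rcases af_zero_or_one k with h | h <;> simp [h]

lemma af_eq_one {j k : ℕ} (h1 : mm j ≤ k) (h2 : k ≤ nn j) : af k = 1 := by
  unfold af; rw [if_pos ⟨j, h1, h2⟩]

lemma af_eq_zero {j k : ℕ} (h1 : nn j < k) (h2 : k < mm (j + 1)) : af k = 0 := by
  unfold af
  rw [if_neg]
  rintro ⟨l, hl1, hl2⟩
  rcases le_or_gt l j with hlj | hlj
  · exact absurd (hl2.trans (nn_mono hlj)) (not_le.mpr h1)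
  · exact absurd ((mm_mono hlj).trans hl1) (not_le.mpr h2)

/-! ### The two main estimates -/

lemma g_le {ε : ℝ} (hε : 0 < ε) (i : ℕ) : af (i + 1) * tt ε i ≤ tt ε i := by
  calc af (i + 1) * tt ε i ≤ 1 * tt ε i :=
    mul_le_mul_of_nonneg_right (af_le_one _) (tt_nonneg hε i)
  _ = tt ε i := one_mul _

lemma g_nonneg {ε : ℝ} (hε : 0 < ε) (i : ℕ) : 0 ≤ af (i + 1) * tt ε i :=
  mul_nonneg (af_nonneg _) (tt_nonneg hε i)

lemma g_summable {ε : ℝ} (hε : 0 < ε) (h2 : ε ≤ 2 * π) :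
    Summable (fun i => af (i + 1) * tt ε i) :=
  Summable.of_nonneg_of_le (g_nonneg hε) (g_le hε) (hasSum_tt hε h2).summable

lemma lower_bound (j : ℕ) : 1 / 2 < ∑' i, af (i + 1) * tt (ee j) i := by
  set e := ee j with he
  have he0 : 0 < e := ee_pos j
  have he2 : e ≤ 2 * π := ee_le_2pi j
  have hsum : Summable (fun i => af (i + 1) * tt e i) := g_summable he0 he2
  have hsub : (mm j - 1 : ℕ) ≤ nn j := by have := mm_le_nn j; omega
  have h1 : ∑ i ∈ Ico (mm j - 1) (nn j), af (i + 1) * tt e i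
      ≤ ∑' i, af (i + 1) * tt e i :=
    Summable.sum_le_tsum _ (fun i _ => g_nonneg he0 i) hsum
  have h2 : ∑ i ∈ Ico (mm j - 1) (nn j), af (i + 1) * tt e i
      = ∑ i ∈ Ico (mm j - 1) (nn j), tt e i := by
    apply Finset.sum_congr rfl
    intro i hi
    rw [Finset.mem_Ico] at hi
    have hm1 := mm_ge_one j
    rw [af_eq_one (j := j) (by omega) (by omega), one_mul]
  have h3 : ∑ i ∈ Ico (mm j - 1) (nn j), tt e i
      = ∑ i ∈ range (nn j), tt e i - ∑ i ∈ range (mm j - 1), tt e i :=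
    Finset.sum_Ico_eq_sub _ hsub
  have h4 : (2 * π - e) / 8 - 1 / 16 ≤ ∑ i ∈ range (nn j), tt e i :=
    (spec j).2.2.2.1.2
  have h5 : ∑ i ∈ range (mm j - 1), tt e i ≤ 1 / 16 := by
    have hh := head_le he0 (mm j - 1)
    have hcast : ((mm j - 1 : ℕ) : ℝ) ≤ (mm j : ℝ) := by
      exact_mod_cast Nat.sub_le _ _
    have hme : (mm j : ℝ) * e ≤ 1 / 4 := (spec j).2.2.1.2.2
    nlinarith
  have hhalf : e ≤ 1 / 2 := ee_le_half j
  have hπ := pi_big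
  calc (1:ℝ) / 2 < (2 * π - e) / 8 - 1 / 16 - 1 / 16 := by nlinarith
    _ ≤ ∑ i ∈ Ico (mm j - 1) (nn j), tt e i := by rw [h3]; linarith
    _ = ∑ i ∈ Ico (mm j - 1) (nn j), af (i + 1) * tt e i := h2.symm
    _ ≤ _ := h1

lemma upper_bound (j : ℕ) : ∑' i, af (i + 1) * tt (ee' j) i < 1 / 4 := by
  set e := ee' j with he
  have he0 : 0 < e := ee'_pos j
  have he2 : e ≤ 2 * π := ee'_le_2pi j
  have hsum : Summable (fun i => af (i + 1) * tt e i) := g_summable he0 he2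
  have htt : Summable (tt e) := (hasSum_tt he0 he2).summable
  set G : Finset ℕ := Ico (nn j) (mm (j + 1) - 1) with hG
  set h : ℕ → ℝ := fun i => if i ∈ G then tt e i else 0 with hh
  have hhsum : Summable h := summable_of_ne_finset_zero (s := G) (fun i hi => if_neg hi)
  have hpt : ∀ i, af (i + 1) * tt e i ≤ tt e i - h i := by
    intro i
    by_cases hig : i ∈ G
    · have : af (i + 1) = 0 := by
        rw [Finset.mem_Ico] at hig
        have := nn_lt_mm_succ j
        exact af_eq_zero (j := j) (by omega) (by omega)
      rw [this, zero_mul, hh]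
      simp only [if_pos hig]
      simp
    · have : h i = 0 := if_neg hig
      rw [this, sub_zero]
      exact g_le he0 i
  have hle := Summable.tsum_le_tsum hpt hsum (htt.sub hhsum)
  have htsub : ∑' i, (tt e i - h i) = (2 * π - e) / 8 - ∑ i ∈ G, tt e i := by
    rw [Summable.tsum_sub htt hhsum, (hasSum_tt he0 he2).tsum_eq]
    congr 1
    rw [tsum_eq_sum (s := G) (fun i hi => if_neg hi)]
    exact Finset.sum_congr rfl fun i hi => if_pos hi
  have hGsum : ∑ i ∈ G, tt e i
      = ∑ i ∈ range (mm (j + 1) - 1), tt e i - ∑ i ∈ range (nn j), tt e i := by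
    rw [hG]
    exact Finset.sum_Ico_eq_sub _ (by have := nn_lt_mm_succ j; omega)
  have h4 : (2 * π - e) / 8 - 1 / 16 ≤ ∑ i ∈ range (mm (j + 1) - 1), tt e i :=
    (spec_succ j).2.1
  have h5 : ∑ i ∈ range (nn j), tt e i ≤ 1 / 16 := by
    have hh' := head_le he0 (nn j)
    have hne : (nn j : ℝ) * e ≤ 1 / 4 := (spec j).2.2.2.2.2.2
    nlinarith
  rw [htsub] at hle
  have : ∑' i, af (i + 1) * tt e i ≤ 1 / 8 := by
    rw [hGsum] at hle
    linarith
  linarith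

theorem stmt_8 :
    ∃ α : ℕ → ℝ, (∀ i, α i = 0 ∨ α i = 1) ∧
      ∃ ε ε' : ℕ → ℝ,
        StrictAnti ε ∧ StrictAnti ε' ∧
        (∀ n, 0 < ε n) ∧ (∀ n, 0 < ε' n) ∧
        Tendsto ε atTop (nhds 0) ∧ Tendsto ε' atTop (nhds 0) ∧
        (∀ n, (1:ℝ)/2 <
          ∑' i : ℕ, α (i+1) * Real.sin ((i+1) * ε n / 2) ^ 2 / (((i:ℝ)+1) ^ 2 * ε n)) ∧
        (∀ n,
          (∑' i : ℕ, α (i+1) * Real.sin ((i+1) * ε' n / 2) ^ 2 / (((i:ℝ)+1) ^ 2 * ε' n))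
            < 1/4) := by
  refine ⟨af, af_zero_or_one, ee, ee', strictAnti_ee, strictAnti_ee',
    ee_pos, ee'_pos, tendsto_ee, tendsto_ee', ?_, ?_⟩
  · intro n
    have := lower_bound n
    convert this using 2 with i
    unfold tt
    funext i
    rw [mul_div_assoc]
  · intro n
    have := upper_bound n
    convert this using 2 with i
    unfold tt
    funext i
    rw [mul_div_assoc]
end

section
/- Let u : [0,T] → ℝ be continuous, v : [0,T] → ℝ continuous and of bounded variation, and let (π_n) be a sequence of partitions 0 = t_0^n < t_1^n < ⋯ < t_{j_n}^n = T with mesh tending to 0, such that the quadratic sums Q_n = ∑_{k=1}^{j_n} (u(t_k^n) - u(t_{k-1}^n))² are bounded in n. Let f : ℝ² → ℝ be C^{1,1} and set F(x,w) = ∫_0^x f(y,w) dy. Then the symmetric (Stratonovich-type) Riemann sums ∑_{k=1}^{j_n} ((f(u(t_{k-1}^n), v(t_{k-1}^n)) + f(u(t_k^n), v(t_k^n)))/2)·(u(t_k^n) - u(t_{k-1}^n)) converge as n → ∞ to F(u(T), v(T)) - F(u(0), v(0)) - ∫_{(0,T]} F₂'(u(t), v(t)) dv(t). -/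
open Real Filter MeasureTheory
open intervalIntegral

lemma steps_mono {α : Type*} [Preorder α] (φ : ℕ → α) (n : ℕ)
    (h : ∀ k < n, φ k ≤ φ (k+1)) : ∀ {a b : ℕ}, a ≤ b → b ≤ n → φ a ≤ φ b := by
  intro a b hab hbn
  induction b with
  | zero => simp [Nat.le_zero.mp hab]
  | succ b ih =>
    rcases Nat.lt_or_ge a (b+1) with h' | h'
    · exact le_trans (ih (Nat.lt_succ_iff.mp h') (le_trans (Nat.le_succ b) hbn))
        (h b (Nat.lt_of_succ_le hbn))
    · have : a = b + 1 := le_antisymm hab h'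
      subst this; exact le_refl _

lemma steps_strict {α : Type*} [Preorder α] (φ : ℕ → α) (n : ℕ)
    (h : ∀ k < n, φ k < φ (k+1)) : ∀ {a b : ℕ}, a < b → b ≤ n → φ a < φ b := by
  intro a b hab hbn
  induction b with
  | zero => omega
  | succ b ih =>
    rcases Nat.lt_or_ge a b with h' | h'
    · exact lt_trans (ih h' (le_trans (Nat.le_succ b) hbn)) (h b (Nat.lt_of_succ_le hbn))
    · have : a = b := by omega
      subst this; exact h a (Nat.lt_of_succ_le hbn)

lemma sum_blocks (g : ℕ → ℝ) :
    ∀ (n : ℕ) (φ : ℕ → ℕ), (∀ k < n, φ k ≤ φ (k+1)) →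
    ∑ k ∈ Finset.range n, ∑ i ∈ Finset.Ico (φ k) (φ (k+1)), g i
      = ∑ i ∈ Finset.Ico (φ 0) (φ n), g i := by
  intro n
  induction n with
  | zero => simp
  | succ n ih =>
    intro φ hφ
    rw [Finset.sum_range_succ, ih φ (fun k hk => hφ k (Nat.lt_succ_of_lt hk)),
      Finset.sum_Ico_consecutive]
    · exact steps_mono φ n (fun k hk => hφ k (Nat.lt_succ_of_lt hk)) (Nat.zero_le n) (le_refl n)
    · exact hφ n (Nat.lt_succ_self n)

lemma sum_Ico_telescope (g : ℕ → ℝ) {a b : ℕ} (h : a ≤ b) :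
    ∑ i ∈ Finset.Ico a b, (g (i+1) - g i) = g b - g a := by
  rw [Finset.sum_Ico_eq_sub _ h, Finset.sum_range_sub, Finset.sum_range_sub]; ring

lemma refine_est (g v : ℝ → ℝ) (T ε δ V : ℝ) (hε : 0 ≤ ε)
    (hg : ∀ x ∈ Set.Icc (0:ℝ) T, ∀ y ∈ Set.Icc (0:ℝ) T, |x - y| ≤ δ → |g x - g y| ≤ ε)
    (j : ℕ) (t : ℕ → ℝ) (ht0 : t 0 = 0) (htT : t j = T)
    (htmono : ∀ k < j, t k < t (k+1))
    (hδ : ∀ k < j, t (k+1) - t k ≤ δ)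
    (N : ℕ) (s : ℕ → ℝ) (hs0 : s 0 = 0) (hsN : s N = T)
    (hsmono : Monotone s) (hsstrict : ∀ i < N, s i < s (i+1))
    (hsub : ∀ k ≤ j, ∃ i ≤ N, s i = t k)
    (hvar : ∑ i ∈ Finset.range N, |v (s (i+1)) - v (s i)| ≤ V) :
    |∑ k ∈ Finset.range j, g (t k) * (v (t (k+1)) - v (t k))
      - ∑ i ∈ Finset.range N, g (s i) * (v (s (i+1)) - v (s i))| ≤ ε * V := by
  -- basic monotonicity facts
  have htm : ∀ {a b : ℕ}, a ≤ b → b ≤ j → t a ≤ t b := by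
    intro a b hab hbj
    rcases eq_or_lt_of_le hab with rfl | h
    · exact le_refl _
    · exact (steps_strict t j htmono h hbj).le
  have hsm : ∀ {a b : ℕ}, a < b → b ≤ N → s a < s b :=
    fun hab hbN => steps_strict s N hsstrict hab hbN
  have htIcc : ∀ k ≤ j, t k ∈ Set.Icc (0:ℝ) T := by
    intro k hk
    exact ⟨ht0 ▸ htm (Nat.zero_le k) hk, htT ▸ htm hk (le_refl j)⟩
  have hsIcc : ∀ i ≤ N, s i ∈ Set.Icc (0:ℝ) T := by
    intro i hi
    exact ⟨hs0 ▸ hsmono (Nat.zero_le i), hsN ▸ hsmono hi⟩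
  -- the index map φ
  have hsub' : ∀ k, ∃ i, (k ≤ j → (i ≤ N ∧ s i = t k)) := by
    intro k
    by_cases hk : k ≤ j
    · obtain ⟨i, hi, hsi⟩ := hsub k hk
      exact ⟨i, fun _ => ⟨hi, hsi⟩⟩
    · exact ⟨0, fun h => absurd h hk⟩
  choose φ hφ using hsub'
  have hφN : ∀ k ≤ j, φ k ≤ N := fun k hk => (hφ k hk).1
  have hφs : ∀ k ≤ j, s (φ k) = t k := fun k hk => (hφ k hk).2
  have hφmono : ∀ k < j, φ k ≤ φ (k+1) := by
    intro k hk
    by_contra hcon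
    push_neg at hcon
    have h1 : s (φ (k+1)) < s (φ k) := hsm hcon (hφN k hk.le)
    rw [hφs k hk.le, hφs (k+1) hk] at h1
    exact absurd (htmono k hk) (by linarith)
  have hφ0 : φ 0 = 0 := by
    by_contra hcon
    have h1 : s 0 < s (φ 0) := hsm (Nat.pos_of_ne_zero fun h => hcon h) (hφN 0 (Nat.zero_le j))
    rw [hφs 0 (Nat.zero_le j), ht0, hs0] at h1
    exact lt_irrefl _ h1
  have hφj : φ j = N := by
    rcases eq_or_lt_of_le (hφN j (le_refl j)) with h | h
    · exact h
    · exfalso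
      have h1 : s (φ j) < s N := hsm h (le_refl N)
      rw [hφs j (le_refl j), htT, hsN] at h1
      exact lt_irrefl _ h1
  -- rewrite the coarse sum as a double sum
  have key1 : ∑ k ∈ Finset.range j, g (t k) * (v (t (k+1)) - v (t k))
      = ∑ k ∈ Finset.range j, ∑ i ∈ Finset.Ico (φ k) (φ (k+1)),
          g (t k) * (v (s (i+1)) - v (s i)) := by
    apply Finset.sum_congr rfl
    intro k hk
    rw [Finset.mem_range] at hk
    rw [← Finset.mul_sum, sum_Ico_telescope (fun i => v (s i)) (hφmono k hk),
      hφs k hk.le, hφs (k+1) hk]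
  have key2 : ∑ i ∈ Finset.range N, g (s i) * (v (s (i+1)) - v (s i))
      = ∑ k ∈ Finset.range j, ∑ i ∈ Finset.Ico (φ k) (φ (k+1)),
          g (s i) * (v (s (i+1)) - v (s i)) := by
    rw [sum_blocks _ j φ hφmono, hφ0, hφj, Finset.range_eq_Ico]
  rw [key1, key2, ← Finset.sum_sub_distrib]
  have absle : ∀ k ∈ Finset.range j,
      |∑ i ∈ Finset.Ico (φ k) (φ (k+1)), g (t k) * (v (s (i+1)) - v (s i))
        - ∑ i ∈ Finset.Ico (φ k) (φ (k+1)), g (s i) * (v (s (i+1)) - v (s i))|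
      ≤ ∑ i ∈ Finset.Ico (φ k) (φ (k+1)), ε * |v (s (i+1)) - v (s i)| := by
    intro k hk
    rw [Finset.mem_range] at hk
    rw [← Finset.sum_sub_distrib]
    refine le_trans (Finset.abs_sum_le_sum_abs _ _) (Finset.sum_le_sum ?_)
    intro i hi
    rw [Finset.mem_Ico] at hi
    have hiN : i ≤ N := le_trans hi.2.le (hφN (k+1) hk)
    have h1 : t k ≤ s i := by
      rw [← hφs k hk.le]; exact hsmono hi.1
    have h2 : s i ≤ t (k+1) := by
      rw [← hφs (k+1) hk]; exact hsmono hi.2.le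
    have hd : |t k - s i| ≤ δ := by
      rw [abs_sub_comm, abs_of_nonneg (by linarith)]
      have := hδ k hk
      linarith
    have hgb := hg (t k) (htIcc k hk.le) (s i) (hsIcc i hiN) hd
    rw [← sub_mul, abs_mul]
    exact mul_le_mul_of_nonneg_right hgb (abs_nonneg _)
  refine le_trans (Finset.abs_sum_le_sum_abs _ _) ?_
  refine le_trans (Finset.sum_le_sum absle) ?_
  have := sum_blocks (fun i => ε * |v (s (i+1)) - v (s i)|) j φ hφmono
  rw [this, hφ0, hφj, ← Finset.range_eq_Ico, ← Finset.mul_sum]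
  exact mul_le_mul_of_nonneg_left hvar hε

lemma var_sum_le (v : ℝ → ℝ) (T : ℝ) (hbv : BoundedVariationOn v (Set.Icc 0 T))
    (s : ℕ → ℝ) (hs : Monotone s) (hmem : ∀ i, s i ∈ Set.Icc (0:ℝ) T) (N : ℕ) :
    ∑ i ∈ Finset.range N, |v (s (i+1)) - v (s i)|
      ≤ (eVariationOn v (Set.Icc 0 T)).toReal := by
  have h := eVariationOn.sum_le (f := v) (n := N) hs hmem
  have h2 : ENNReal.ofReal (∑ i ∈ Finset.range N, |v (s (i+1)) - v (s i)|)
      ≤ eVariationOn v (Set.Icc 0 T) := by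
    rw [ENNReal.ofReal_sum_of_nonneg (fun i _ => abs_nonneg _)]
    refine le_trans (le_of_eq (Finset.sum_congr rfl fun i _ => ?_)) h
    rw [edist_dist, Real.dist_eq]
  exact ENNReal.ofReal_le_iff_le_toReal hbv |>.mp h2

lemma merged (T : ℝ) (hT : 0 < T) (j₁ j₂ : ℕ) (t₁ t₂ : ℕ → ℝ)
    (h10 : t₁ 0 = 0) (h1T : t₁ j₁ = T) (h20 : t₂ 0 = 0) (h2T : t₂ j₂ = T)
    (h1m : ∀ k ≤ j₁, t₁ k ∈ Set.Icc (0:ℝ) T) (h2m : ∀ k ≤ j₂, t₂ k ∈ Set.Icc (0:ℝ) T) :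
    ∃ (N : ℕ) (s : ℕ → ℝ), s 0 = 0 ∧ s N = T ∧ Monotone s ∧
      (∀ i < N, s i < s (i+1)) ∧ (∀ i, s i ∈ Set.Icc (0:ℝ) T) ∧
      (∀ k ≤ j₁, ∃ i ≤ N, s i = t₁ k) ∧ (∀ k ≤ j₂, ∃ i ≤ N, s i = t₂ k) := by
  classical
  set A : Finset ℝ := (Finset.range (j₁+1)).image t₁ ∪ (Finset.range (j₂+1)).image t₂ with hA
  have h0A : (0:ℝ) ∈ A := by
    apply Finset.mem_union_left
    exact Finset.mem_image.mpr ⟨0, Finset.mem_range.mpr (Nat.succ_pos j₁), h10⟩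
  have hTA : T ∈ A := by
    apply Finset.mem_union_left
    exact Finset.mem_image.mpr ⟨j₁, Finset.mem_range.mpr (Nat.lt_succ_self j₁), h1T⟩
  have hAIcc : ∀ x ∈ A, x ∈ Set.Icc (0:ℝ) T := by
    intro x hx
    rcases Finset.mem_union.mp hx with h | h <;>
      · obtain ⟨k, hk, rfl⟩ := Finset.mem_image.mp h
        first
        | exact h1m k (Nat.lt_succ_iff.mp (Finset.mem_range.mp hk))
        | exact h2m k (Nat.lt_succ_iff.mp (Finset.mem_range.mp hk))
  have hAne : A.Nonempty := ⟨0, h0A⟩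
  set l : List ℝ := A.sort (· ≤ ·) with hl
  have hlpos : 0 < l.length := by
    rw [hl, Finset.length_sort]; exact Finset.card_pos.mpr hAne
  set N : ℕ := l.length - 1 with hN
  have hNlen : N < l.length := Nat.sub_lt hlpos Nat.one_pos
  set s : ℕ → ℝ := fun i => l.getD (min i N) 0 with hs
  have hget : ∀ i (hi : i ≤ N), s i = l.get ⟨i, lt_of_le_of_lt hi hNlen⟩ := by
    intro i hi
    simp only [hs]
    rw [min_eq_left hi, List.getD_eq_getElem l 0 (lt_of_le_of_lt hi hNlen)]
    simp [List.get_eq_getElem]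
  have hmin : A.min' hAne = 0 :=
    le_antisymm (Finset.min'_le A 0 h0A) ((hAIcc _ (A.min'_mem hAne)).1)
  have hmax : A.max' hAne = T :=
    le_antisymm ((hAIcc _ (A.max'_mem hAne)).2) (Finset.le_max' A T hTA)
  have hs0 : s 0 = 0 := by
    rw [hget 0 (Nat.zero_le N), Finset.sorted_zero_eq_min'_aux A hlpos hAne, hmin]
  have hsN : s N = T := by
    rw [hget N (le_refl N)]
    have := Finset.sorted_last_eq_max'_aux A (Nat.sub_lt hlpos Nat.one_pos) hAne
    exact this.trans hmax
  have hsorted : l.Pairwise (· < ·) := (Finset.sortedLT_sort A).pairwise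
  have hsmono : Monotone s := by
    intro a b hab
    have h1 : min a N ≤ min b N := min_le_min hab (le_refl N)
    have := (Finset.pairwise_sort A (· ≤ ·)).rel_get_of_le
      (a := ⟨min a N, lt_of_le_of_lt (min_le_right a N) hNlen⟩)
      (b := ⟨min b N, lt_of_le_of_lt (min_le_right b N) hNlen⟩) h1
    simp only [hs]
    rw [List.getD_eq_getElem l 0 (lt_of_le_of_lt (min_le_right a N) hNlen),
      List.getD_eq_getElem l 0 (lt_of_le_of_lt (min_le_right b N) hNlen)]
    simpa [List.get_eq_getElem] using this
  have hsstrict : ∀ i < N, s i < s (i+1) := by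
    intro i hi
    rw [hget i hi.le, hget (i+1) hi]
    exact hsorted.rel_get_of_lt (Fin.mk_lt_mk.mpr (Nat.lt_succ_self i))
  have hsmem : ∀ i, s i ∈ Set.Icc (0:ℝ) T := by
    intro i
    have h1 : s i = l.get ⟨min i N, lt_of_le_of_lt (min_le_right i N) hNlen⟩ := by
      simp only [hs]
      rw [List.getD_eq_getElem l 0 (lt_of_le_of_lt (min_le_right i N) hNlen)]
      simp [List.get_eq_getElem]
    rw [h1]
    exact hAIcc _ ((Finset.mem_sort (· ≤ ·)).mp (l.get_mem _))
  have hsub : ∀ x ∈ A, ∃ i ≤ N, s i = x := by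
    intro x hx
    have hxl : x ∈ l := (Finset.mem_sort (· ≤ ·)).mpr hx
    obtain ⟨⟨i, hi⟩, hgi⟩ := List.mem_iff_get.mp hxl
    have hiN : i ≤ N := Nat.le_sub_one_of_lt hi
    exact ⟨i, hiN, by rw [hget i hiN]; exact hgi⟩
  refine ⟨N, s, hs0, hsN, hsmono, hsstrict, hsmem, ?_, ?_⟩
  · intro k hk
    exact hsub _ (Finset.mem_union_left _
      (Finset.mem_image.mpr ⟨k, Finset.mem_range.mpr (by omega), rfl⟩))
  · intro k hk
    exact hsub _ (Finset.mem_union_right _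
      (Finset.mem_image.mpr ⟨k, Finset.mem_range.mpr (by omega), rfl⟩))

lemma F2_rep (f f2 F2 : ℝ × ℝ → ℝ) (F : ℝ × ℝ → ℝ)
    (hf2 : ∀ p : ℝ × ℝ, HasDerivAt (fun w => f (p.1, w)) (f2 p) p.2)
    (hfc : Continuous f) (hf2c : Continuous f2)
    (hF : ∀ p : ℝ × ℝ, F p = ∫ y in (0:ℝ)..p.1, f (y, p.2))
    (hF2 : ∀ p : ℝ × ℝ, HasDerivAt (fun w => F (p.1, w)) (F2 p) p.2) :
    ∀ p : ℝ × ℝ, F2 p = ∫ y in (0:ℝ)..p.1, f2 (y, p.2) := by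
  rintro ⟨x, w⟩
  have hK : IsCompact ((Set.uIcc (0:ℝ) x) ×ˢ (Set.Icc (w-1) (w+1))) :=
    isCompact_uIcc.prod isCompact_Icc
  obtain ⟨C, hC⟩ := hK.exists_bound_of_continuousOn hf2c.continuousOn
  have hder := intervalIntegral.hasDerivAt_integral_of_dominated_loc_of_deriv_le
    (F := fun w' y => f (y, w')) (F' := fun w' y => f2 (y, w')) (x₀ := w)
    (a := 0) (b := x) (bound := fun _ => C) (μ := volume) (s := Metric.ball w 1) (Metric.ball_mem_nhds w one_pos)
    (Eventually.of_forall fun w' =>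
      ((hfc.comp (continuous_id.prodMk continuous_const)).aestronglyMeasurable))
    ((hfc.comp (continuous_id.prodMk continuous_const)).intervalIntegrable 0 x)
    ((hf2c.comp (continuous_id.prodMk continuous_const)).aestronglyMeasurable)
    (Eventually.of_forall fun y hy w' hw' => by
      have h1 : y ∈ Set.uIcc (0:ℝ) x := Set.uIoc_subset_uIcc hy
      have h2 : w' ∈ Set.Icc (w-1) (w+1) := by
        rw [Metric.mem_ball, Real.dist_eq] at hw'
        constructor <;> [linarith [abs_lt.mp hw'] ; linarith [(abs_lt.mp hw').2]]
      exact hC (y, w') ⟨h1, h2⟩)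
    (intervalIntegrable_const)
    (Eventually.of_forall fun y hy w' hw' => hf2 (y, w'))
  have heq : (fun w' => F (x, w')) = fun w' => ∫ y in (0:ℝ)..x, f (y, w') := by
    funext w'
    exact hF (x, w')
  have h1 : HasDerivAt (fun w' => F (x, w')) (∫ y in (0:ℝ)..x, f2 (y, w)) w := by
    rw [heq]; exact hder.2
  exact (hF2 (x, w)).unique h1

lemma F2_cont (f2 F2 : ℝ × ℝ → ℝ) (hf2c : Continuous f2)
    (hrep : ∀ p : ℝ × ℝ, F2 p = ∫ y in (0:ℝ)..p.1, f2 (y, p.2)) :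
    Continuous F2 := by
  have : F2 = fun p : ℝ × ℝ => ∫ y in (0:ℝ)..p.1, f2 (y, p.2) := funext hrep
  rw [this]
  exact intervalIntegral.continuous_parametric_intervalIntegral_of_continuous
    (μ := volume) (f := fun (p : ℝ × ℝ) y => f2 (y, p.2))
    (by exact hf2c.comp (continuous_snd.prodMk (continuous_fst.snd))) continuous_fst

lemma abs_sub_le_of_uIcc {a b x : ℝ} (hx : x ∈ Set.uIcc a b) : |x - a| ≤ |b - a| := by
  rcases le_total a b with h | h
  · rw [Set.uIcc_of_le h] at hx
    rw [abs_of_nonneg (by linarith [hx.1]), abs_of_nonneg (by linarith)]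
    linarith [hx.2]
  · rw [Set.uIcc_of_ge h] at hx
    rw [abs_of_nonpos (by linarith [hx.2]), abs_of_nonpos (by linarith)]
    linarith [hx.1]

lemma term_bound (f f1 f2 F2 F : ℝ × ℝ → ℝ)
    (hf1 : ∀ p : ℝ × ℝ, HasDerivAt (fun x => f (x, p.2)) (f1 p) p.1)
    (hf2 : ∀ p : ℝ × ℝ, HasDerivAt (fun w => f (p.1, w)) (f2 p) p.2)
    (hfc : Continuous f) (hf1c : Continuous f1) (hf2c : Continuous f2)
    (hF : ∀ p : ℝ × ℝ, F p = ∫ y in (0:ℝ)..p.1, f (y, p.2))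
    (hF2 : ∀ p : ℝ × ℝ, HasDerivAt (fun w => F (p.1, w)) (F2 p) p.2)
    (hF2c : Continuous F2)
    (R C₂ ε₁ ε₃ h₁ h₃ : ℝ)
    (hC₂ : ∀ p ∈ Set.Icc (-R) R ×ˢ Set.Icc (-R) R, |f2 p| ≤ C₂)
    (hUC1 : ∀ p ∈ Set.Icc (-R) R ×ˢ Set.Icc (-R) R,
      ∀ q ∈ Set.Icc (-R) R ×ˢ Set.Icc (-R) R, dist p q ≤ h₁ → |f1 p - f1 q| ≤ ε₁)
    (hUC3 : ∀ p ∈ Set.Icc (-R) R ×ˢ Set.Icc (-R) R,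
      ∀ q ∈ Set.Icc (-R) R ×ˢ Set.Icc (-R) R, dist p q ≤ h₃ → |F2 p - F2 q| ≤ ε₃)
    (x₀ x₁ w₀ w₁ : ℝ)
    (hx₀ : x₀ ∈ Set.Icc (-R) R) (hx₁ : x₁ ∈ Set.Icc (-R) R)
    (hw₀ : w₀ ∈ Set.Icc (-R) R) (hw₁ : w₁ ∈ Set.Icc (-R) R)
    (hdx : |x₁ - x₀| ≤ h₁) (hdw : |w₁ - w₀| ≤ h₃) (hε₁ : 0 ≤ ε₁) :
    |F (x₁, w₁) - F (x₀, w₀) - (f (x₀, w₀) + f (x₁, w₁)) / 2 * (x₁ - x₀)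
      - F2 (x₀, w₀) * (w₁ - w₀)|
    ≤ 2 * ε₁ * (x₁ - x₀)^2 + C₂/2 * |w₁ - w₀| * |x₁ - x₀| + ε₃ * |w₁ - w₀| := by
  have hIccx : Set.uIcc x₀ x₁ ⊆ Set.Icc (-R) R := Set.uIcc_subset_Icc hx₀ hx₁
  have hIccw : Set.uIcc w₀ w₁ ⊆ Set.Icc (-R) R := Set.uIcc_subset_Icc hw₀ hw₁
  -- ### A3 bound
  have hF2int : IntervalIntegrable (fun w => F2 (x₀, w)) volume w₀ w₁ :=
    (hF2c.comp (continuous_const.prodMk continuous_id)).intervalIntegrable _ _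
  have hFTC3 : F (x₀, w₁) - F (x₀, w₀) = ∫ w in w₀..w₁, F2 (x₀, w) :=
    (intervalIntegral.integral_eq_sub_of_hasDerivAt (f := fun w => F (x₀, w))
      (f' := fun w => F2 (x₀, w)) (fun w _ => hF2 (x₀, w)) hF2int).symm
  have hA3 : |F (x₀, w₁) - F (x₀, w₀) - F2 (x₀, w₀) * (w₁ - w₀)| ≤ ε₃ * |w₁ - w₀| := by
    have hconst : F2 (x₀, w₀) * (w₁ - w₀) = ∫ _w in w₀..w₁, F2 (x₀, w₀) := by
      rw [intervalIntegral.integral_const, smul_eq_mul]; ring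
    rw [hFTC3, hconst, ← intervalIntegral.integral_sub hF2int intervalIntegrable_const]
    have hb : ∀ w ∈ Set.uIoc w₀ w₁, ‖F2 (x₀, w) - F2 (x₀, w₀)‖ ≤ ε₃ := by
      intro w hw
      have hw' : w ∈ Set.uIcc w₀ w₁ := Set.uIoc_subset_uIcc hw
      have hd : dist ((x₀, w) : ℝ × ℝ) (x₀, w₀) ≤ h₃ := by
        rw [Prod.dist_eq]
        refine max_le ?_ ?_
        · simpa [Real.dist_eq] using le_trans (abs_nonneg (w₁ - w₀)) hdw
        · simp only [Real.dist_eq]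
          exact le_trans (abs_sub_le_of_uIcc hw') hdw
      simpa [Real.norm_eq_abs] using
        hUC3 (x₀, w) ⟨hx₀, hIccw hw'⟩ (x₀, w₀) ⟨hx₀, hw₀⟩ hd
    exact intervalIntegral.norm_integral_le_of_norm_le_const hb
  -- ### A2 bound
  have hf2int : IntervalIntegrable (fun w => f2 (x₀, w)) volume w₀ w₁ :=
    (hf2c.comp (continuous_const.prodMk continuous_id)).intervalIntegrable _ _
  have hFTC2 : f (x₀, w₁) - f (x₀, w₀) = ∫ w in w₀..w₁, f2 (x₀, w) :=
    (intervalIntegral.integral_eq_sub_of_hasDerivAt (f := fun w => f (x₀, w))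
      (f' := fun w => f2 (x₀, w)) (fun w _ => hf2 (x₀, w)) hf2int).symm
  have hA2 : |f (x₀, w₁) - f (x₀, w₀)| ≤ C₂ * |w₁ - w₀| := by
    rw [hFTC2]
    have hb : ∀ w ∈ Set.uIoc w₀ w₁, ‖f2 (x₀, w)‖ ≤ C₂ := by
      intro w hw
      simpa [Real.norm_eq_abs] using
        hC₂ (x₀, w) ⟨hx₀, hIccw (Set.uIoc_subset_uIcc hw)⟩
    exact intervalIntegral.norm_integral_le_of_norm_le_const hb
  -- ### A1 bound
  obtain ⟨c, hc⟩ : ∃ c, c = f1 (x₀, w₁) := ⟨_, rfl⟩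
  obtain ⟨r, hr⟩ : ∃ r : ℝ → ℝ, r = fun y => f (y, w₁) - f (x₀, w₁) - c * (y - x₀) :=
    ⟨_, rfl⟩
  have hrc : Continuous r := by
    rw [hr]
    apply Continuous.sub
    · exact (hfc.comp (continuous_id.prodMk continuous_const)).sub continuous_const
    · exact continuous_const.mul (continuous_id.sub continuous_const)
  have hf1int : ∀ y : ℝ, IntervalIntegrable (fun z => f1 (z, w₁)) volume x₀ y :=
    fun y => (hf1c.comp (continuous_id.prodMk continuous_const)).intervalIntegrable _ _
  have hrbound : ∀ y ∈ Set.uIcc x₀ x₁, |r y| ≤ ε₁ * |x₁ - x₀| := by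
    intro y hy
    have hFTC1 : f (y, w₁) - f (x₀, w₁) = ∫ z in x₀..y, f1 (z, w₁) :=
      (intervalIntegral.integral_eq_sub_of_hasDerivAt (f := fun z => f (z, w₁))
        (f' := fun z => f1 (z, w₁)) (fun z _ => hf1 (z, w₁)) (hf1int y)).symm
    have hry : r y = ∫ z in x₀..y, (f1 (z, w₁) - c) := by
      rw [intervalIntegral.integral_sub (hf1int y) intervalIntegrable_const,
        intervalIntegral.integral_const, smul_eq_mul]
      simp only [hr, hFTC1]; ring
    rw [hry]
    have hb : ∀ z ∈ Set.uIoc x₀ y, ‖f1 (z, w₁) - c‖ ≤ ε₁ := by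
      intro z hz
      have hz' : z ∈ Set.uIcc x₀ y := Set.uIoc_subset_uIcc hz
      have hzx : z ∈ Set.uIcc x₀ x₁ :=
        Set.uIcc_subset_uIcc Set.left_mem_uIcc hy hz'
      have hd : dist ((z, w₁) : ℝ × ℝ) (x₀, w₁) ≤ h₁ := by
        rw [Prod.dist_eq]
        refine max_le ?_ ?_
        · simp only [Real.dist_eq]
          exact le_trans (abs_sub_le_of_uIcc hzx) hdx
        · simpa [Real.dist_eq] using le_trans (abs_nonneg (x₁ - x₀)) hdx
      rw [hc, Real.norm_eq_abs]
      exact hUC1 (z, w₁) ⟨hIccx hzx, hw₁⟩ (x₀, w₁) ⟨hx₀, hw₁⟩ hd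
    calc ‖∫ z in x₀..y, (f1 (z, w₁) - c)‖ ≤ ε₁ * |y - x₀| :=
          intervalIntegral.norm_integral_le_of_norm_le_const hb
      _ ≤ ε₁ * |x₁ - x₀| := mul_le_mul_of_nonneg_left (abs_sub_le_of_uIcc hy) hε₁
  have hfyint : IntervalIntegrable (fun y => f (y, w₁)) volume x₀ x₁ :=
    (hfc.comp (continuous_id.prodMk continuous_const)).intervalIntegrable _ _
  have hlin : (∫ y in x₀..x₁, (y - x₀)) = (x₁ - x₀)^2 / 2 := by
    rw [intervalIntegral.integral_comp_sub_right (fun y => y) x₀, integral_id]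
    ring
  have hrint : IntervalIntegrable r volume x₀ x₁ := hrc.intervalIntegrable _ _
  have hrval : (∫ y in x₀..x₁, r y)
      = (∫ y in x₀..x₁, f (y, w₁)) - f (x₀, w₁) * (x₁ - x₀) - c * ((x₁ - x₀)^2 / 2) := by
    have h1 : IntervalIntegrable (fun y => f (y, w₁) - f (x₀, w₁)) volume x₀ x₁ :=
      hfyint.sub intervalIntegrable_const
    have h2 : IntervalIntegrable (fun y => c * (y - x₀)) volume x₀ x₁ :=
      (continuous_const.mul (continuous_id.sub continuous_const)).intervalIntegrable _ _
    calc (∫ y in x₀..x₁, r y)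
          = (∫ y in x₀..x₁, (f (y, w₁) - f (x₀, w₁))) - ∫ y in x₀..x₁, c * (y - x₀) := by
          simp only [hr]
          rw [intervalIntegral.integral_sub h1 h2]
      _ = (∫ y in x₀..x₁, f (y, w₁)) - f (x₀, w₁) * (x₁ - x₀) - c * ((x₁ - x₀)^2 / 2) := by
          rw [intervalIntegral.integral_sub hfyint intervalIntegrable_const,
            intervalIntegral.integral_const, intervalIntegral.integral_const_mul, hlin,
            smul_eq_mul]
          ring
  have hx1r : f (x₁, w₁) = f (x₀, w₁) + c * (x₁ - x₀) + r x₁ := by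
    simp only [hr]; ring
  have habs2 : |x₁ - x₀| * |x₁ - x₀| = (x₁ - x₀)^2 := by
    rw [← abs_mul, abs_of_nonneg (mul_self_nonneg _), sq]
  have hA1 : |(∫ y in x₀..x₁, f (y, w₁)) - (f (x₀, w₁) + f (x₁, w₁)) / 2 * (x₁ - x₀)|
      ≤ 2 * ε₁ * (x₁ - x₀)^2 := by
    have heq : (∫ y in x₀..x₁, f (y, w₁)) - (f (x₀, w₁) + f (x₁, w₁)) / 2 * (x₁ - x₀)
        = (∫ y in x₀..x₁, r y) - r x₁ * (x₁ - x₀) / 2 := by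
      rw [hrval, hx1r]; ring
    rw [heq]
    have hb : ∀ y ∈ Set.uIoc x₀ x₁, ‖r y‖ ≤ ε₁ * |x₁ - x₀| := by
      intro y hy
      simpa [Real.norm_eq_abs] using hrbound y (Set.uIoc_subset_uIcc hy)
    have h1 : |∫ y in x₀..x₁, r y| ≤ (ε₁ * |x₁ - x₀|) * |x₁ - x₀| :=
      intervalIntegral.norm_integral_le_of_norm_le_const hb
    have h2 : |r x₁| ≤ ε₁ * |x₁ - x₀| := hrbound x₁ Set.right_mem_uIcc
    have h3 : |r x₁ * (x₁ - x₀) / 2| = |r x₁| * |x₁ - x₀| / 2 := by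
      rw [abs_div, abs_mul, abs_two]
    calc |(∫ y in x₀..x₁, r y) - r x₁ * (x₁ - x₀) / 2|
          ≤ |∫ y in x₀..x₁, r y| + |r x₁ * (x₁ - x₀) / 2| := abs_sub _ _
      _ = |∫ y in x₀..x₁, r y| + |r x₁| * |x₁ - x₀| / 2 := by rw [h3]
      _ ≤ 2 * ε₁ * (x₁ - x₀)^2 := by
          nlinarith [h1, h2, abs_nonneg (x₁ - x₀), habs2,
            mul_le_mul_of_nonneg_right h2 (abs_nonneg (x₁ - x₀))]
  -- ### assembly
  have hsplit : F (x₁, w₁) - F (x₀, w₁) = ∫ y in x₀..x₁, f (y, w₁) := by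
    have h0 : ∀ x : ℝ, IntervalIntegrable (fun y => f (y, w₁)) volume 0 x :=
      fun x => (hfc.comp (continuous_id.prodMk continuous_const)).intervalIntegrable _ _
    rw [hF (x₁, w₁), hF (x₀, w₁)]
    simp only
    rw [intervalIntegral.integral_interval_sub_left (h0 x₁) (h0 x₀)]
  have hT : F (x₁, w₁) - F (x₀, w₀) - (f (x₀, w₀) + f (x₁, w₁)) / 2 * (x₁ - x₀)
      - F2 (x₀, w₀) * (w₁ - w₀)
      = ((∫ y in x₀..x₁, f (y, w₁)) - (f (x₀, w₁) + f (x₁, w₁)) / 2 * (x₁ - x₀))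
        + (f (x₀, w₁) - f (x₀, w₀)) / 2 * (x₁ - x₀)
        + (F (x₀, w₁) - F (x₀, w₀) - F2 (x₀, w₀) * (w₁ - w₀)) := by
    rw [← hsplit]; ring
  have hmid : |(f (x₀, w₁) - f (x₀, w₀)) / 2 * (x₁ - x₀)|
      ≤ C₂ / 2 * |w₁ - w₀| * |x₁ - x₀| := by
    rw [abs_mul, abs_div, abs_two]
    nlinarith [hA2, abs_nonneg (x₁ - x₀),
      mul_le_mul_of_nonneg_right hA2 (abs_nonneg (x₁ - x₀))]
  rw [hT]
  refine le_trans (abs_add_three _ _ _) ?_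
  exact add_le_add (add_le_add hA1 hmid) hA3

lemma getUC {X : Type*} [MetricSpace X] {K : Set X} (hK : IsCompact K) (φ : X → ℝ)
    (hφ : ContinuousOn φ K) {ε : ℝ} (hε : 0 < ε) :
    ∃ h > 0, ∀ p ∈ K, ∀ q ∈ K, dist p q ≤ h → |φ p - φ q| ≤ ε := by
  have hUC := hK.uniformContinuousOn_of_continuous hφ
  rw [Metric.uniformContinuousOn_iff] at hUC
  obtain ⟨δ, hδpos, hδ⟩ := hUC ε hε
  refine ⟨δ/2, by linarith, fun p hp q hq hle => ?_⟩
  have h2 := hδ p hp q hq (lt_of_le_of_lt hle (by linarith))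
  rw [Real.dist_eq] at h2
  exact h2.le

theorem stmt_13 (T : ℝ) (hT : 0 < T)
    (u v : ℝ → ℝ)
    (hu : ContinuousOn u (Set.Icc 0 T))
    (hv : ContinuousOn v (Set.Icc 0 T))
    (hbv : BoundedVariationOn v (Set.Icc 0 T))
    (j : ℕ → ℕ) (hj : ∀ n, 0 < j n)
    (t : ℕ → ℕ → ℝ)
    (ht0 : ∀ n, t n 0 = 0) (htT : ∀ n, t n (j n) = T)
    (hmono : ∀ n, ∀ k < j n, t n k < t n (k+1))
    (hmesh : ∀ δ : ℝ, 0 < δ → ∃ N, ∀ n ≥ N, ∀ k < j n, t n (k+1) - t n k < δ)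
    (hquad : ∃ M : ℝ, ∀ n,
      ∑ k ∈ Finset.range (j n), (u (t n (k+1)) - u (t n k)) ^ 2 ≤ M)
    (f f1 f2 F2 : ℝ × ℝ → ℝ)
    (hf1 : ∀ p : ℝ × ℝ, HasDerivAt (fun x => f (x, p.2)) (f1 p) p.1)
    (hf2 : ∀ p : ℝ × ℝ, HasDerivAt (fun w => f (p.1, w)) (f2 p) p.2)
    (hfc : Continuous f) (hf1c : Continuous f1) (hf2c : Continuous f2)
    (F : ℝ × ℝ → ℝ) (hF : ∀ p : ℝ × ℝ, F p = ∫ y in (0:ℝ)..p.1, f (y, p.2))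
    (hF2 : ∀ p : ℝ × ℝ, HasDerivAt (fun w => F (p.1, w)) (F2 p) p.2) :
    ∃ L : ℝ,
      Tendsto (fun n => ∑ k ∈ Finset.range (j n),
          F2 (u (t n k), v (t n k)) * (v (t n (k+1)) - v (t n k))) atTop (nhds L) ∧
      Tendsto (fun n => ∑ k ∈ Finset.range (j n),
          (f (u (t n k), v (t n k)) + f (u (t n (k+1)), v (t n (k+1)))) / 2
            * (u (t n (k+1)) - u (t n k))) atTop
        (nhds (F (u T, v T) - F (u 0, v 0) - L)) := by
  classical
  obtain ⟨M₀, hM₀⟩ := hquad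
  obtain ⟨M, hMdef⟩ : ∃ M, M = max M₀ 0 := ⟨_, rfl⟩
  have hMnn : 0 ≤ M := hMdef ▸ le_max_right _ _
  have hM : ∀ n, ∑ k ∈ Finset.range (j n), (u (t n (k+1)) - u (t n k)) ^ 2 ≤ M :=
    fun n => le_trans (hM₀ n) (hMdef ▸ le_max_left _ _)
  have hF2rep := F2_rep f f2 F2 F hf2 hfc hf2c hF hF2
  have hF2c : Continuous F2 := F2_cont f2 F2 hf2c hF2rep
  -- partition point facts
  have htwm : ∀ n, ∀ {a b : ℕ}, a ≤ b → b ≤ j n → t n a ≤ t n b := by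
    intro n a b hab hbj
    rcases eq_or_lt_of_le hab with rfl | h
    · exact le_refl _
    · exact (steps_strict (t n) (j n) (hmono n) h hbj).le
  have htmem : ∀ n, ∀ k ≤ j n, t n k ∈ Set.Icc (0:ℝ) T := by
    intro n k hk
    exact ⟨(ht0 n) ▸ htwm n (Nat.zero_le k) hk, (htT n) ▸ htwm n hk (le_refl _)⟩
  -- extended partition functions
  have hτmono : ∀ n, Monotone (fun i => t n (min i (j n))) := by
    intro n a b hab
    exact htwm n (min_le_min hab (le_refl _)) (min_le_right _ _)
  have hτmem : ∀ n, ∀ i, t n (min i (j n)) ∈ Set.Icc (0:ℝ) T :=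
    fun n i => htmem n _ (min_le_right _ _)
  obtain ⟨V, hVdef⟩ : ∃ V, V = (eVariationOn v (Set.Icc 0 T)).toReal := ⟨_, rfl⟩
  have hVnn : 0 ≤ V := hVdef ▸ ENNReal.toReal_nonneg
  have hvarsum : ∀ n, ∑ k ∈ Finset.range (j n), |v (t n (k+1)) - v (t n k)| ≤ V := by
    intro n
    have h1 := var_sum_le v T hbv (fun i => t n (min i (j n))) (hτmono n) (hτmem n) (j n)
    rw [hVdef]
    refine le_trans (le_of_eq (Finset.sum_congr rfl fun k hk => ?_)) h1
    rw [Finset.mem_range] at hk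
    rw [min_eq_left hk.le, min_eq_left (Nat.succ_le_of_lt hk)]
  -- Part A : the Stieltjes sums converge
  obtain ⟨g, hgdef⟩ : ∃ g : ℝ → ℝ, g = fun τ => F2 (u τ, v τ) := ⟨_, rfl⟩
  have hgc : ContinuousOn g (Set.Icc 0 T) := by
    rw [hgdef]
    exact hF2c.comp_continuousOn (hu.prodMk hv)
  have hgsum : ∀ n, (∑ k ∈ Finset.range (j n),
      F2 (u (t n k), v (t n k)) * (v (t n (k+1)) - v (t n k)))
      = ∑ k ∈ Finset.range (j n), g (t n k) * (v (t n (k+1)) - v (t n k)) := by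
    intro n; exact Finset.sum_congr rfl fun k _ => by rw [hgdef]
  have hcauchy : CauchySeq (fun n => ∑ k ∈ Finset.range (j n),
      F2 (u (t n k), v (t n k)) * (v (t n (k+1)) - v (t n k))) := by
    rw [Metric.cauchySeq_iff]
    intro ε hε
    have hε' : 0 < ε / (4 * (V + 1)) := by positivity
    obtain ⟨δ₀, hδ₀pos, hδ₀⟩ := getUC isCompact_Icc g hgc hε'
    obtain ⟨N, hN⟩ := hmesh δ₀ hδ₀pos
    refine ⟨N, fun m hm n hn => ?_⟩
    obtain ⟨Nσ, s, hs0, hsN, hsmono, hsstrict, hsmem, hsub1, hsub2⟩ :=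
      merged T hT (j m) (j n) (t m) (t n) (ht0 m) (htT m) (ht0 n) (htT n)
        (htmem m) (htmem n)
    have hvarσ : ∑ i ∈ Finset.range Nσ, |v (s (i+1)) - v (s i)| ≤ V := by
      rw [hVdef]; exact var_sum_le v T hbv s hsmono hsmem Nσ
    have h1 := refine_est g v T (ε / (4 * (V + 1))) δ₀ V hε'.le hδ₀ (j m) (t m)
      (ht0 m) (htT m) (hmono m) (fun k hk => (hN m hm k hk).le) Nσ s hs0 hsN
      hsmono hsstrict hsub1 hvarσ
    have h2 := refine_est g v T (ε / (4 * (V + 1))) δ₀ V hε'.le hδ₀ (j n) (t n)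
      (ht0 n) (htT n) (hmono n) (fun k hk => (hN n hn k hk).le) Nσ s hs0 hsN
      hsmono hsstrict hsub2 hvarσ
    rw [Real.dist_eq, hgsum m, hgsum n]
    have hεV : ε / (4 * (V + 1)) * V ≤ ε / 4 := by
      rw [div_mul_eq_mul_div, div_le_div_iff₀ (by positivity) (by norm_num)]
      nlinarith
    calc |(∑ k ∈ Finset.range (j m), g (t m k) * (v (t m (k+1)) - v (t m k)))
          - ∑ k ∈ Finset.range (j n), g (t n k) * (v (t n (k+1)) - v (t n k))|
        ≤ |(∑ k ∈ Finset.range (j m), g (t m k) * (v (t m (k+1)) - v (t m k)))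
            - ∑ i ∈ Finset.range Nσ, g (s i) * (v (s (i+1)) - v (s i))|
          + |(∑ k ∈ Finset.range (j n), g (t n k) * (v (t n (k+1)) - v (t n k)))
            - ∑ i ∈ Finset.range Nσ, g (s i) * (v (s (i+1)) - v (s i))| := by
          rw [abs_sub_comm ((∑ k ∈ Finset.range (j n), g (t n k) * (v (t n (k+1)) - v (t n k)))) _]
          exact abs_sub_le _ _ _
      _ ≤ ε / (4 * (V + 1)) * V + ε / (4 * (V + 1)) * V := add_le_add h1 h2
      _ < ε := by linarith
  obtain ⟨L, hL⟩ := cauchySeq_tendsto_of_complete hcauchy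
  refine ⟨L, hL, ?_⟩
  -- Part B : the combined sums converge to F(uT,vT) - F(u0,v0)
  obtain ⟨Ru, hRu⟩ := isCompact_Icc.exists_bound_of_continuousOn hu
  obtain ⟨Rv, hRv⟩ := isCompact_Icc.exists_bound_of_continuousOn hv
  obtain ⟨R, hRdef⟩ : ∃ R, R = max Ru Rv := ⟨_, rfl⟩
  have hmemuK : ∀ τ ∈ Set.Icc (0:ℝ) T, u τ ∈ Set.Icc (-R) R := by
    intro τ hτ
    have h1 : |u τ| ≤ R := by
      rw [hRdef]
      exact le_trans (hRu τ hτ) (le_max_left _ _)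
    exact ⟨neg_le_of_abs_le h1, le_of_abs_le h1⟩
  have hmemvK : ∀ τ ∈ Set.Icc (0:ℝ) T, v τ ∈ Set.Icc (-R) R := by
    intro τ hτ
    have h1 : |v τ| ≤ R := by
      rw [hRdef]
      exact le_trans (hRv τ hτ) (le_max_right _ _)
    exact ⟨neg_le_of_abs_le h1, le_of_abs_le h1⟩
  have hKcompact : IsCompact (Set.Icc (-R) R ×ˢ Set.Icc (-R) R) :=
    isCompact_Icc.prod isCompact_Icc
  obtain ⟨C₂₀, hC₂₀⟩ := hKcompact.exists_bound_of_continuousOn hf2c.continuousOn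
  obtain ⟨C₂, hC₂def⟩ : ∃ C₂, C₂ = max C₂₀ 0 := ⟨_, rfl⟩
  have hC₂nn : 0 ≤ C₂ := hC₂def ▸ le_max_right _ _
  have hC₂ : ∀ p ∈ Set.Icc (-R) R ×ˢ Set.Icc (-R) R, |f2 p| ≤ C₂ := by
    intro p hp
    exact le_trans (hC₂₀ p hp) (hC₂def ▸ le_max_left _ _)
  obtain ⟨C, hCdef⟩ : ∃ C, C = F (u T, v T) - F (u 0, v 0) := ⟨_, rfl⟩
  have htele : ∀ n, ∑ k ∈ Finset.range (j n),
      (F (u (t n (k+1)), v (t n (k+1))) - F (u (t n k), v (t n k))) = C := by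
    intro n
    rw [Finset.sum_range_sub (fun k => F (u (t n k), v (t n k))), htT n, ht0 n, hCdef]
  have hsum : Tendsto (fun n => (∑ k ∈ Finset.range (j n),
      (f (u (t n k), v (t n k)) + f (u (t n (k+1)), v (t n (k+1)))) / 2
        * (u (t n (k+1)) - u (t n k)))
      + ∑ k ∈ Finset.range (j n),
      F2 (u (t n k), v (t n k)) * (v (t n (k+1)) - v (t n k))) atTop (nhds C) := by
    rw [Metric.tendsto_atTop]
    intro ε hε
    have hε₁ : 0 < ε / (6 * (M + 1)) := by positivity
    have hε₃ : 0 < ε / (6 * (V + 1)) := by positivity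
    obtain ⟨h₁, hh₁pos, hUC1⟩ := getUC hKcompact f1 hf1c.continuousOn hε₁
    obtain ⟨h₃, hh₃pos, hUC3⟩ := getUC hKcompact F2 hF2c.continuousOn hε₃
    obtain ⟨h₂, hh₂def⟩ : ∃ h₂, h₂ = ε / (6 * (C₂ + 1) * (V + 1)) := ⟨_, rfl⟩
    have hh₂pos : 0 < h₂ := hh₂def ▸ by positivity
    have hxscale : 0 < min h₁ h₂ := lt_min hh₁pos hh₂pos
    obtain ⟨δu, hδupos, hδu⟩ := getUC isCompact_Icc u hu hxscale
    obtain ⟨δv, hδvpos, hδv⟩ := getUC isCompact_Icc v hv hh₃pos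
    obtain ⟨N, hN⟩ := hmesh (min δu δv) (lt_min hδupos hδvpos)
    refine ⟨N, fun n hn => ?_⟩
    -- per-partition-point increments
    have hsteps : ∀ k < j n,
        |u (t n (k+1)) - u (t n k)| ≤ min h₁ h₂ ∧ |v (t n (k+1)) - v (t n k)| ≤ h₃ := by
      intro k hk
      have hm1 := htmem n k hk.le
      have hm2 := htmem n (k+1) hk
      have hd : dist (t n (k+1)) (t n k) ≤ min δu δv := by
        rw [Real.dist_eq, abs_of_nonneg (by linarith [hmono n k hk])]
        exact (hN n hn k hk).le
      constructor
      · exact hδu (t n (k+1)) hm2 (t n k) hm1 (le_trans hd (min_le_left _ _))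
      · exact hδv (t n (k+1)) hm2 (t n k) hm1 (le_trans hd (min_le_right _ _))
    -- termwise bound
    have hterm : ∀ k < j n,
        |(f (u (t n k), v (t n k)) + f (u (t n (k+1)), v (t n (k+1)))) / 2
            * (u (t n (k+1)) - u (t n k))
          + F2 (u (t n k), v (t n k)) * (v (t n (k+1)) - v (t n k))
          - (F (u (t n (k+1)), v (t n (k+1))) - F (u (t n k), v (t n k)))|
        ≤ 2 * (ε / (6 * (M + 1))) * (u (t n (k+1)) - u (t n k))^2
          + C₂/2 * |v (t n (k+1)) - v (t n k)| * |u (t n (k+1)) - u (t n k)|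
          + (ε / (6 * (V + 1))) * |v (t n (k+1)) - v (t n k)| := by
      intro k hk
      have hm1 := htmem n k hk.le
      have hm2 := htmem n (k+1) hk
      have hb := term_bound f f1 f2 F2 F hf1 hf2 hfc hf1c hf2c hF hF2 hF2c
        R C₂ (ε / (6 * (M + 1))) (ε / (6 * (V + 1))) h₁ h₃ hC₂ hUC1 hUC3
        (u (t n k)) (u (t n (k+1))) (v (t n k)) (v (t n (k+1)))
        (hmemuK _ hm1) (hmemuK _ hm2) (hmemvK _ hm1) (hmemvK _ hm2)
        (le_trans (hsteps k hk).1 (min_le_left _ _)) (hsteps k hk).2 hε₁.le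
      rw [show (f (u (t n k), v (t n k)) + f (u (t n (k+1)), v (t n (k+1)))) / 2
            * (u (t n (k+1)) - u (t n k))
          + F2 (u (t n k), v (t n k)) * (v (t n (k+1)) - v (t n k))
          - (F (u (t n (k+1)), v (t n (k+1))) - F (u (t n k), v (t n k)))
        = -(F (u (t n (k+1)), v (t n (k+1))) - F (u (t n k), v (t n k))
          - (f (u (t n k), v (t n k)) + f (u (t n (k+1)), v (t n (k+1)))) / 2
            * (u (t n (k+1)) - u (t n k))
          - F2 (u (t n k), v (t n k)) * (v (t n (k+1)) - v (t n k))) by ring, abs_neg]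
      exact hb
    -- assemble
    rw [Real.dist_eq]
    have hsplit : (∑ k ∈ Finset.range (j n),
        (f (u (t n k), v (t n k)) + f (u (t n (k+1)), v (t n (k+1)))) / 2
          * (u (t n (k+1)) - u (t n k)))
        + (∑ k ∈ Finset.range (j n),
          F2 (u (t n k), v (t n k)) * (v (t n (k+1)) - v (t n k))) - C
        = ∑ k ∈ Finset.range (j n),
          ((f (u (t n k), v (t n k)) + f (u (t n (k+1)), v (t n (k+1)))) / 2
            * (u (t n (k+1)) - u (t n k))
          + F2 (u (t n k), v (t n k)) * (v (t n (k+1)) - v (t n k))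
          - (F (u (t n (k+1)), v (t n (k+1))) - F (u (t n k), v (t n k)))) := by
      rw [← htele n, ← Finset.sum_add_distrib, ← Finset.sum_sub_distrib]
    rw [hsplit]
    have habs := Finset.abs_sum_le_sum_abs (fun k =>
        (f (u (t n k), v (t n k)) + f (u (t n (k+1)), v (t n (k+1)))) / 2
          * (u (t n (k+1)) - u (t n k))
        + F2 (u (t n k), v (t n k)) * (v (t n (k+1)) - v (t n k))
        - (F (u (t n (k+1)), v (t n (k+1))) - F (u (t n k), v (t n k))))
      (Finset.range (j n))
    have hbd : ∑ k ∈ Finset.range (j n),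
        |(f (u (t n k), v (t n k)) + f (u (t n (k+1)), v (t n (k+1)))) / 2
          * (u (t n (k+1)) - u (t n k))
        + F2 (u (t n k), v (t n k)) * (v (t n (k+1)) - v (t n k))
        - (F (u (t n (k+1)), v (t n (k+1))) - F (u (t n k), v (t n k)))|
        ≤ 2 * (ε / (6 * (M + 1))) * M + C₂/2 * h₂ * V + (ε / (6 * (V + 1))) * V := by
      have hterms : ∀ k ∈ Finset.range (j n),
          |(f (u (t n k), v (t n k)) + f (u (t n (k+1)), v (t n (k+1)))) / 2
            * (u (t n (k+1)) - u (t n k))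
          + F2 (u (t n k), v (t n k)) * (v (t n (k+1)) - v (t n k))
          - (F (u (t n (k+1)), v (t n (k+1))) - F (u (t n k), v (t n k)))|
          ≤ 2 * (ε / (6 * (M + 1))) * (u (t n (k+1)) - u (t n k))^2
            + C₂/2 * h₂ * |v (t n (k+1)) - v (t n k)|
            + (ε / (6 * (V + 1))) * |v (t n (k+1)) - v (t n k)| := by
        intro k hk
        rw [Finset.mem_range] at hk
        refine le_trans (hterm k hk) ?_
        have h1 : |u (t n (k+1)) - u (t n k)| ≤ h₂ :=
          le_trans (hsteps k hk).1 (min_le_right _ _)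
        have h2 : C₂/2 * |v (t n (k+1)) - v (t n k)| * |u (t n (k+1)) - u (t n k)|
            ≤ C₂/2 * h₂ * |v (t n (k+1)) - v (t n k)| := by
          rw [show C₂/2 * |v (t n (k+1)) - v (t n k)| * |u (t n (k+1)) - u (t n k)|
            = C₂/2 * |u (t n (k+1)) - u (t n k)| * |v (t n (k+1)) - v (t n k)| by ring]
          have := mul_le_mul_of_nonneg_right
            (mul_le_mul_of_nonneg_left h1 (by linarith : (0:ℝ) ≤ C₂/2))
            (abs_nonneg (v (t n (k+1)) - v (t n k)))
          exact this
        linarith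
      refine le_trans (Finset.sum_le_sum hterms) ?_
      rw [Finset.sum_add_distrib, Finset.sum_add_distrib, ← Finset.mul_sum,
        ← Finset.mul_sum, ← Finset.mul_sum]
      have hq := hM n
      have hw := hvarsum n
      have e1 : 2 * (ε / (6 * (M + 1)))
          * (∑ k ∈ Finset.range (j n), (u (t n (k+1)) - u (t n k))^2)
          ≤ 2 * (ε / (6 * (M + 1))) * M :=
        mul_le_mul_of_nonneg_left hq (by positivity)
      have e2 : C₂/2 * h₂ * (∑ k ∈ Finset.range (j n), |v (t n (k+1)) - v (t n k)|)
          ≤ C₂/2 * h₂ * V :=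
        mul_le_mul_of_nonneg_left hw (by positivity)
      have e3 : (ε / (6 * (V + 1))) * (∑ k ∈ Finset.range (j n), |v (t n (k+1)) - v (t n k)|)
          ≤ (ε / (6 * (V + 1))) * V :=
        mul_le_mul_of_nonneg_left hw (by positivity)
      linarith
    have hnum : 2 * (ε / (6 * (M + 1))) * M + C₂/2 * h₂ * V + (ε / (6 * (V + 1))) * V
        < ε := by
      have n1 : 2 * (ε / (6 * (M + 1))) * M ≤ ε/3 := by
        rw [show 2 * (ε / (6 * (M + 1))) * M = 2 * ε * M / (6 * (M + 1)) by ring,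
          div_le_div_iff₀ (by positivity) (by norm_num : (0:ℝ) < 3)]
        nlinarith [mul_nonneg hε.le hMnn]
      have n2 : C₂/2 * h₂ * V ≤ ε/6 := by
        have hC₂1 : C₂ + 1 ≠ 0 := by positivity
        have hV1 : V + 1 ≠ 0 := by positivity
        have e : ((C₂+1)*(V+1)) * (ε/(6*(C₂+1)*(V+1))) = ε/6 := by
          field_simp
        calc C₂/2 * h₂ * V = (C₂/2*V) * h₂ := by ring
          _ ≤ ((C₂+1)*(V+1)) * h₂ := by
              refine mul_le_mul_of_nonneg_right ?_ hh₂pos.le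
              nlinarith
          _ = ε/6 := by rw [hh₂def]; exact e
      have n3 : (ε / (6 * (V + 1))) * V ≤ ε/6 := by
        rw [show (ε / (6 * (V + 1))) * V = ε * V / (6 * (V + 1)) by ring,
          div_le_div_iff₀ (by positivity) (by norm_num : (0:ℝ) < 6)]
        nlinarith [mul_nonneg hε.le hVnn]
      linarith
    exact lt_of_le_of_lt (le_trans habs hbd) hnum
  have hfinal := hsum.sub hL
  rw [hCdef] at hfinal
  simpa only [add_sub_cancel_right] using hfinal
end

section
/- Let (c_i)_{i≥1} satisfy |c_i| ≤ 1 and suppose c_i = 0 for i ≥ M. Define u(s) = ∑_{i<M} c_i sin(is)/i. Then for the dyadic partition Δ_{kn} = (2π(k-1)2^{-n}, 2πk 2^{-n}], the sums S_n = ∑_{k=1}^{2^n} (u(2πk2^{-n}) - u(2π(k-1)2^{-n}))² satisfy S_n = 2 ∑_{i<M} c_i² (2^n/i²) sin²(i 2^{-n} π) for all n with 2^n > 2M, and consequently S_n → 0 as n → ∞. -/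
open Real Filter

/-- Sum of cosines at midpoints vanishes when `N` does not divide `m`. -/
lemma cos_sum_eq_zero (N : ℕ) (m : ℤ) (hm : ¬ (N:ℤ) ∣ m) :
    ∑ k ∈ Finset.range N, Real.cos ((m : ℝ) * π * (2*(k:ℝ)+1) / N) = 0 := by
  rcases eq_or_ne N 0 with rfl | hN
  · simp
  have hNC : (N : ℂ) ≠ 0 := Nat.cast_ne_zero.mpr hN
  set z : ℂ := Complex.exp ((2 * π * m / N) * Complex.I) with hz
  have hz1 : z ≠ 1 := by
    intro h
    rw [hz, Complex.exp_eq_one_iff] at h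
    obtain ⟨t, ht⟩ := h
    apply hm
    refine ⟨t, ?_⟩
    have h2πI : (2 * (π:ℂ) * Complex.I) ≠ 0 :=
      mul_ne_zero (mul_ne_zero two_ne_zero (Complex.ofReal_ne_zero.mpr Real.pi_ne_zero))
        Complex.I_ne_zero
    have hkey : (m:ℂ) / N = t := by
      apply mul_left_cancel₀ h2πI
      calc (2 * (π:ℂ) * Complex.I) * ((m:ℂ)/N) = 2 * (π:ℂ) * (m:ℂ) / N * Complex.I := by ring
        _ = (t:ℂ) * (2 * (π:ℂ) * Complex.I) := ht
        _ = (2 * (π:ℂ) * Complex.I) * t := by ring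
    have hmn : (m : ℂ) = t * N := by
      field_simp at hkey
      linear_combination hkey
    have : m = t * (N:ℤ) := by exact_mod_cast hmn
    linear_combination this
  have hzN : z ^ N = 1 := by
    rw [hz, ← Complex.exp_nat_mul]
    have harg : (N:ℂ) * (2 * π * m / N * Complex.I) = m * (2 * π * Complex.I) := by
      field_simp
    rw [harg, Complex.exp_int_mul_two_pi_mul_I]
  have hsum : ∑ k ∈ Finset.range N, (Complex.exp ((π * m / N) * Complex.I) * z ^ k) = 0 := by
    rw [← Finset.mul_sum, geom_sum_eq hz1, hzN]
    simp
  calc ∑ k ∈ Finset.range N, Real.cos ((m : ℝ) * π * (2*(k:ℝ)+1) / N)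
      = (∑ k ∈ Finset.range N, (Complex.exp ((π * m / N) * Complex.I) * z ^ k)).re := by
        rw [Complex.re_sum]
        refine Finset.sum_congr rfl fun k _ => ?_
        rw [hz, ← Complex.exp_nat_mul, ← Complex.exp_add]
        have harg : (π * (m:ℂ) / N) * Complex.I + (k:ℂ) * (2 * π * m / N * Complex.I)
            = (((m : ℝ) * π * (2*(k:ℝ)+1) / N : ℝ) : ℂ) * Complex.I := by
          push_cast
          field_simp
          ring
        rw [harg, Complex.exp_ofReal_mul_I_re]
    _ = 0 := by rw [hsum, Complex.zero_re]

lemma cos_prod_sum (N i j : ℕ) (hi : 0 < i) (hj : 0 < j) (hij : i + j < N) :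
    ∑ k ∈ Finset.range N, Real.cos ((i:ℝ) * (π * (2*(k:ℝ)+1) / N)) *
      Real.cos ((j:ℝ) * (π * (2*(k:ℝ)+1) / N))
    = if i = j then (N:ℝ)/2 else 0 := by
  have cc : ∀ x y : ℝ, Real.cos x * Real.cos y = (Real.cos (x - y) + Real.cos (x + y)) / 2 := by
    intro x y; rw [Real.cos_sub, Real.cos_add]; ring
  have hplus : ¬ (N:ℤ) ∣ ((i:ℤ) + j) := by
    intro h
    have := Int.le_of_dvd (by positivity) h
    omega
  have hsum2 : ∑ k ∈ Finset.range N, Real.cos ((((i:ℤ)+j : ℤ):ℝ) * π * (2*(k:ℝ)+1) / N) = 0 :=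
    cos_sum_eq_zero N _ hplus
  rcases eq_or_ne i j with rfl | hne
  · simp only [if_pos rfl]
    have hterm : ∀ k ∈ Finset.range N,
        Real.cos ((i:ℝ) * (π * (2*(k:ℝ)+1) / N)) * Real.cos ((i:ℝ) * (π * (2*(k:ℝ)+1) / N))
        = 1/2 + Real.cos ((((i:ℤ)+i : ℤ):ℝ) * π * (2*(k:ℝ)+1) / N) / 2 := by
      intro k _
      rw [cc, sub_self, Real.cos_zero]
      have : (i:ℝ) * (π * (2*(k:ℝ)+1) / N) + (i:ℝ) * (π * (2*(k:ℝ)+1) / N)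
          = (((i:ℤ)+i : ℤ):ℝ) * π * (2*(k:ℝ)+1) / N := by push_cast; ring
      rw [this]; ring
    rw [Finset.sum_congr rfl hterm, Finset.sum_add_distrib, ← Finset.sum_div,
      ← Finset.sum_div, hsum2]
    simp
  · simp only [if_neg hne]
    have hminus : ¬ (N:ℤ) ∣ ((i:ℤ) - j) := by
      intro h
      have h0 : (0:ℤ) < |(i:ℤ) - j| := by
        rw [abs_pos]; intro h'; apply hne; omega
      have hle := Int.le_of_dvd h0 ((dvd_abs _ _).mpr h)
      have hlt : |(i:ℤ) - j| < N := abs_lt.mpr ⟨by omega, by omega⟩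
      omega
    have hsum1 : ∑ k ∈ Finset.range N, Real.cos ((((i:ℤ)-j : ℤ):ℝ) * π * (2*(k:ℝ)+1) / N) = 0 :=
      cos_sum_eq_zero N _ hminus
    have hterm : ∀ k ∈ Finset.range N,
        Real.cos ((i:ℝ) * (π * (2*(k:ℝ)+1) / N)) * Real.cos ((j:ℝ) * (π * (2*(k:ℝ)+1) / N))
        = Real.cos ((((i:ℤ)-j : ℤ):ℝ) * π * (2*(k:ℝ)+1) / N) / 2
          + Real.cos ((((i:ℤ)+j : ℤ):ℝ) * π * (2*(k:ℝ)+1) / N) / 2 := by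
      intro k _
      rw [cc]
      have h1 : (i:ℝ) * (π * (2*(k:ℝ)+1) / N) - (j:ℝ) * (π * (2*(k:ℝ)+1) / N)
          = (((i:ℤ)-j : ℤ):ℝ) * π * (2*(k:ℝ)+1) / N := by push_cast; ring
      have h2 : (i:ℝ) * (π * (2*(k:ℝ)+1) / N) + (j:ℝ) * (π * (2*(k:ℝ)+1) / N)
          = (((i:ℤ)+j : ℤ):ℝ) * π * (2*(k:ℝ)+1) / N := by push_cast; ring
      rw [h1, h2]; ring
    rw [Finset.sum_congr rfl hterm, Finset.sum_add_distrib, ← Finset.sum_div, ← Finset.sum_div,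
      hsum1, hsum2]
    simp

theorem stmt_17 (c : ℕ → ℝ) (hc : ∀ i, |c i| ≤ 1) (M : ℕ)
    (hM : ∀ i, M ≤ i → c i = 0)
    (u : ℝ → ℝ)
    (hu : ∀ s : ℝ, u s = ∑ i ∈ Finset.Ico 1 M, c i * Real.sin (i * s) / i)
    (S : ℕ → ℝ)
    (hS : ∀ n : ℕ, S n = ∑ k ∈ Finset.range (2^n),
      (u (2 * π * (k+1) / 2^n) - u (2 * π * k / 2^n)) ^ 2) :
    (∀ n : ℕ, 2 * M < 2^n →
      S n = 2 * ∑ i ∈ Finset.Ico 1 M,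
        c i ^ 2 * ((2:ℝ)^n / (i:ℝ)^2) * Real.sin (i * π / 2^n) ^ 2) ∧
    Tendsto S atTop (nhds 0) := by
  have hident : ∀ n : ℕ, 2 * M < 2^n →
      S n = 2 * ∑ i ∈ Finset.Ico 1 M,
        c i ^ 2 * ((2:ℝ)^n / (i:ℝ)^2) * Real.sin (i * π / 2^n) ^ 2 := by
    intro n hn
    have hcast : ((2^n : ℕ) : ℝ) = (2:ℝ)^n := by push_cast; ring
    have h2n : ((2:ℝ)^n) ≠ 0 := by positivity
    set d : ℕ → ℝ := fun i => 2 * c i * Real.sin (i * π / 2^n) / i with hd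
    set f : ℕ → ℕ → ℝ := fun i k => Real.cos ((i:ℝ) * (π * (2*(k:ℝ)+1) / (2:ℝ)^n)) with hf
    have key : ∀ k : ℕ, u (2 * π * ((k:ℝ)+1) / 2^n) - u (2 * π * (k:ℝ) / 2^n)
        = ∑ i ∈ Finset.Ico 1 M, d i * f i k := by
      intro k
      rw [hu, hu, ← Finset.sum_sub_distrib]
      refine Finset.sum_congr rfl fun i hi => ?_
      have hsin : Real.sin ((i:ℝ) * (2 * π * ((k:ℝ)+1) / 2^n))
            - Real.sin ((i:ℝ) * (2 * π * (k:ℝ) / 2^n))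
          = 2 * Real.sin ((i:ℝ) * π / 2^n) * Real.cos ((i:ℝ) * (π * (2*(k:ℝ)+1) / (2:ℝ)^n)) := by
        rw [Real.sin_sub_sin]
        have hA : ((i:ℝ) * (2 * π * ((k:ℝ)+1) / 2^n) - (i:ℝ) * (2 * π * (k:ℝ) / 2^n)) / 2
            = (i:ℝ) * π / 2^n := by ring
        have hB : ((i:ℝ) * (2 * π * ((k:ℝ)+1) / 2^n) + (i:ℝ) * (2 * π * (k:ℝ) / 2^n)) / 2
            = (i:ℝ) * (π * (2*(k:ℝ)+1) / (2:ℝ)^n) := by ring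
        rw [hA, hB]
      have hsplit : c i * Real.sin ((i:ℝ) * (2 * π * ((k:ℝ)+1) / 2^n)) / i
            - c i * Real.sin ((i:ℝ) * (2 * π * (k:ℝ) / 2^n)) / i
          = c i / i * (Real.sin ((i:ℝ) * (2 * π * ((k:ℝ)+1) / 2^n))
            - Real.sin ((i:ℝ) * (2 * π * (k:ℝ) / 2^n))) := by ring
      rw [hsplit, hsin, hd, hf]
      ring
    have e1 : S n = ∑ i ∈ Finset.Ico 1 M, ∑ j ∈ Finset.Ico 1 M,
        (d i * d j) * ∑ k ∈ Finset.range (2^n), f i k * f j k := by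
      rw [hS]
      have hsq : ∀ k : ℕ, (u (2 * π * ((k:ℝ)+1) / 2^n) - u (2 * π * (k:ℝ) / 2^n)) ^ 2
          = ∑ i ∈ Finset.Ico 1 M, ∑ j ∈ Finset.Ico 1 M, (d i * d j) * (f i k * f j k) := by
        intro k
        rw [key k, sq, Finset.sum_mul_sum]
        exact Finset.sum_congr rfl fun i _ => Finset.sum_congr rfl fun j _ => by ring
      rw [Finset.sum_congr rfl fun k _ => hsq k, Finset.sum_comm]
      refine Finset.sum_congr rfl fun i _ => ?_
      rw [Finset.sum_comm]
      refine Finset.sum_congr rfl fun j _ => ?_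
      rw [Finset.mul_sum]
    have e2 : ∀ i ∈ Finset.Ico 1 M, ∀ j ∈ Finset.Ico 1 M,
        ∑ k ∈ Finset.range (2^n), f i k * f j k = if i = j then ((2:ℝ)^n)/2 else 0 := by
      intro i hi j hj
      simp only [Finset.mem_Ico] at hi hj
      have := cos_prod_sum (2^n) i j hi.1 hj.1 (by omega)
      rw [hcast] at this
      exact this
    rw [e1]
    rw [Finset.mul_sum]
    refine Finset.sum_congr rfl fun i hi => ?_
    have : ∀ j ∈ Finset.Ico 1 M, (d i * d j) * ∑ k ∈ Finset.range (2^n), f i k * f j k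
        = if i = j then (d i * d j) * (((2:ℝ)^n)/2) else 0 := by
      intro j hj
      rw [e2 i hi j hj]
      split <;> simp
    rw [Finset.sum_congr rfl this, Finset.sum_ite_eq, if_pos hi, hd]
    have hiM := Finset.mem_Ico.mp hi
    have hi0 : (i:ℝ) ≠ 0 := Nat.cast_ne_zero.mpr (by omega)
    field_simp
  refine ⟨hident, ?_⟩
  have h0 : ∀ n, 0 ≤ S n := by
    intro n
    rw [hS]
    exact Finset.sum_nonneg fun k _ => sq_nonneg _
  have hub : ∀ᶠ n in atTop, S n ≤ 2 * M * π^2 * (1/2:ℝ)^n := by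
    filter_upwards [eventually_ge_atTop (2*M+1)] with n hn
    have hn' : 2 * M < 2^n := lt_of_lt_of_le (by omega) (Nat.le_of_lt (Nat.lt_two_pow_self : n < 2 ^ n))
    rw [hident n hn']
    have hterm : ∀ i ∈ Finset.Ico 1 M,
        c i ^ 2 * ((2:ℝ)^n / (i:ℝ)^2) * Real.sin (i * π / 2^n) ^ 2 ≤ π^2 * (1/2:ℝ)^n := by
      intro i hi
      have hiM := Finset.mem_Ico.mp hi
      have hi0 : (0:ℝ) < (i:ℝ) := by exact_mod_cast hiM.1
      have h2n : (0:ℝ) < (2:ℝ)^n := by positivity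
      have hs : Real.sin ((i:ℝ) * π / 2^n) ^ 2 ≤ ((i:ℝ) * π / 2^n) ^ 2 := Real.sin_sq_le_sq
      have hc2 : c i ^ 2 ≤ 1 := by
        have := hc i
        nlinarith [abs_nonneg (c i), sq_abs (c i)]
      calc c i ^ 2 * ((2:ℝ)^n / (i:ℝ)^2) * Real.sin (i * π / 2^n) ^ 2
          ≤ 1 * ((2:ℝ)^n / (i:ℝ)^2) * (((i:ℝ) * π / 2^n) ^ 2) := by
            apply mul_le_mul
            · apply mul_le_mul_of_nonneg_right hc2 (by positivity)
            · exact hs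
            · positivity
            · positivity
        _ = π^2 * (1/2:ℝ)^n := by rw [one_div_pow]; field_simp
    calc 2 * ∑ i ∈ Finset.Ico 1 M,
          c i ^ 2 * ((2:ℝ)^n / (i:ℝ)^2) * Real.sin (i * π / 2^n) ^ 2
        ≤ 2 * ∑ i ∈ Finset.Ico 1 M, π^2 * (1/2:ℝ)^n := by
          apply mul_le_mul_of_nonneg_left (Finset.sum_le_sum hterm) (by norm_num)
      _ ≤ 2 * M * π^2 * (1/2:ℝ)^n := by
          rw [Finset.sum_const, Nat.card_Ico, nsmul_eq_mul]
          have hMle : ((M - 1 : ℕ) : ℝ) ≤ (M : ℝ) := by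
            exact_mod_cast Nat.sub_le M 1
          have hp : (0:ℝ) ≤ π^2 * (1/2:ℝ)^n := by positivity
          have h2 := mul_le_mul_of_nonneg_right hMle hp
          nlinarith [h2]
  have hlim : Tendsto (fun n : ℕ => 2 * M * π^2 * (1/2:ℝ)^n) atTop (nhds 0) := by
    have : Tendsto (fun n : ℕ => (1/2:ℝ)^n) atTop (nhds 0) :=
      tendsto_pow_atTop_nhds_zero_of_lt_one (by norm_num) (by norm_num)
    simpa using this.const_mul (2 * M * π^2)
  exact tendsto_of_tendsto_of_tendsto_of_le_of_le' tendsto_const_nhds hlim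
    (Eventually.of_forall h0) hub
end
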